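/- arXiv:2202.07030 — 6 statements merged into one kernel-verified Lean document; each statement's English description precedes it below -/
import Mathlib

section
/- (Weak lower semicontinuity of the affine energy, Theorem 6, C¹ form.) Let 1 ≤ p < n with p > 1, let Ω ⊆ ℝⁿ be a bounded open set, and let u_k (k ∈ ℕ) and u_0 be C¹ functions ℝⁿ → ℝ with compact support contained in Ω. Assume: (a) sup_k ∫_Ω |∇u_k(x)|^p dx < ∞; (b) the gradients converge weakly in L^p, i.e. for every measurable vector field V : Ω → ℝⁿ with ∫_Ω |V(x)|^{p/(p−1)} dx < ∞ one has ∫_Ω ∇u_k(x)·V(x) dx → ∫_Ω ∇u_0(x)·V(x) dx as k → ∞. Then E_{p,Ω}(u_0) ≤ liminf_{k→∞} E_{p,Ω}(u_k). -/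
open MeasureTheory Metric Filter
open scoped ENNReal RealInnerProductSpace NNReal

noncomputable section

/-- Euclidean n-space `ℝⁿ`. -/
abbrev En (n : ℕ) : Type := EuclideanSpace ℝ (Fin n)

/-- The unit sphere `S^{n-1}` of `ℝⁿ`. -/
abbrev unitSphere (n : ℕ) := Metric.sphere (0 : En n) 1

/-- The surface measure `σ` on the unit sphere, with `σ(S^{n-1}) = n ω_n`. -/
def sphereMeasure (n : ℕ) : Measure (unitSphere n) :=
  (volume : Measure (En n)).toSphere

/-- `n ω_n`, where `ω_n` is the volume of the unit Euclidean ball of `ℝⁿ`. -/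
def nOmega (n : ℕ) : ℝ := (n : ℝ) * (volume (Metric.ball (0 : En n) 1)).toReal

/-- The directional energy `Ψ_ξ(u) = ∫_Ω |∇u(x)·ξ|^p dx`. -/
def Psi (n : ℕ) (p : ℝ) (Ω : Set (En n)) (u : En n → ℝ) (ξ : unitSphere n) : ℝ :=
  ∫ x in Ω, |fderiv ℝ u x (ξ : En n)| ^ p

/-- The normalizing constant `α_{n,p}` relative to a chosen unit vector `e₁`. -/
def alphanp (n : ℕ) (p : ℝ) (e₁ : En n) : ℝ :=
  nOmega n ^ (((n : ℝ) + p) / ((n : ℝ) * p)) *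
    (∫ ξ, |⟪e₁, (ξ : En n)⟫| ^ p ∂(sphereMeasure n)) ^ (-(1 / p))

/-- The affine `L^p` energy `E_{p,Ω}(u)`; the conventions `0^{-n/p} = +∞`
and `(+∞)^{-1/n} = 0` are built into `ENNReal.rpow`. -/
def affineEnergy (n : ℕ) (p : ℝ) (e₁ : En n) (Ω : Set (En n)) (u : En n → ℝ) : ℝ :=
  alphanp n p e₁ *
    ((∫⁻ ξ, ENNReal.ofReal (Psi n p Ω u ξ) ^ (-((n : ℝ) / p)) ∂(sphereMeasure n)) ^
      (-(1 / (n : ℝ)))).toReal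
section Aux

variable {n : ℕ} {p q : ℝ} {Ω : Set (En n)}

lemma coe_sphere_norm (ξ : unitSphere n) : ‖(ξ : En n)‖ = 1 :=
  mem_sphere_zero_iff_norm.mp ξ.2

lemma cont_fderiv {w : En n → ℝ} (hw : ContDiff ℝ 1 w) : Continuous (fderiv ℝ w) :=
  hw.continuous_fderiv one_ne_zero

lemma cont_dirDeriv {w : En n → ℝ} (hw : ContDiff ℝ 1 w) (v : En n) :
    Continuous fun x => fderiv ℝ w x v :=
  (ContinuousLinearMap.apply ℝ ℝ v).continuous.comp (cont_fderiv hw)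

lemma hcs_dirDeriv {w : En n → ℝ} (hw : HasCompactSupport w) (v : En n) :
    HasCompactSupport fun x => fderiv ℝ w x v :=
  (hw.fderiv (𝕜 := ℝ)).comp_left (g := fun L : En n →L[ℝ] ℝ => L v) rfl

lemma abs_fderiv_apply_le {w : En n → ℝ} (x : En n) (ξ : unitSphere n) :
    |fderiv ℝ w x (ξ : En n)| ≤ ‖fderiv ℝ w x‖ := by
  calc |fderiv ℝ w x (ξ : En n)| ≤ ‖fderiv ℝ w x‖ * ‖(ξ : En n)‖ :=
        (fderiv ℝ w x).le_opNorm _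
    _ = ‖fderiv ℝ w x‖ := by rw [coe_sphere_norm, mul_one]

lemma cont_abs_rpow (hp : 0 ≤ p) : Continuous fun t : ℝ => |t| ^ p :=
  (Real.continuous_rpow_const hp).comp continuous_abs

lemma integrable_abs_rpow_dirDeriv (hp : 0 < p) {w : En n → ℝ} (hw : ContDiff ℝ 1 w)
    (hwc : HasCompactSupport w) (v : En n) :
    Integrable (fun x => |fderiv ℝ w x v| ^ p) (volume.restrict Ω) := by
  have hc : Continuous fun x => |fderiv ℝ w x v| ^ p :=
    (cont_abs_rpow hp.le).comp (cont_dirDeriv hw v)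
  have hcs : HasCompactSupport fun x => |fderiv ℝ w x v| ^ p :=
    (hcs_dirDeriv hwc v).comp_left (g := fun t : ℝ => |t| ^ p)
      (by simp [Real.zero_rpow hp.ne'])
  exact (hc.integrable_of_hasCompactSupport hcs).restrict

lemma integrable_norm_fderiv_rpow (hp : 0 < p) {w : En n → ℝ} (hw : ContDiff ℝ 1 w)
    (hwc : HasCompactSupport w) :
    Integrable (fun x => ‖fderiv ℝ w x‖ ^ p) (volume.restrict Ω) := by
  have hc : Continuous fun x => ‖fderiv ℝ w x‖ ^ p :=
    (Real.continuous_rpow_const hp.le).comp (cont_fderiv hw).norm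
  have hcs : HasCompactSupport fun x => ‖fderiv ℝ w x‖ ^ p :=
    (hwc.fderiv (𝕜 := ℝ)).comp_left (g := fun L : En n →L[ℝ] ℝ => ‖L‖ ^ p)
      (by simp [Real.zero_rpow hp.ne'])
  exact (hc.integrable_of_hasCompactSupport hcs).restrict

lemma Psi_nonneg (w : En n → ℝ) (ξ : unitSphere n) : 0 ≤ Psi n p Ω w ξ :=
  MeasureTheory.integral_nonneg fun x => Real.rpow_nonneg (abs_nonneg _) p

lemma Psi_le_total (hp : 0 < p) {w : En n → ℝ} (hw : ContDiff ℝ 1 w)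
    (hwc : HasCompactSupport w) (ξ : unitSphere n) :
    Psi n p Ω w ξ ≤ ∫ x in Ω, ‖fderiv ℝ w x‖ ^ p := by
  refine MeasureTheory.setIntegral_mono (integrable_abs_rpow_dirDeriv hp hw hwc _)
    (integrable_norm_fderiv_rpow hp hw hwc) fun x => ?_
  exact Real.rpow_le_rpow (abs_nonneg _) (abs_fderiv_apply_le x ξ) hp.le

lemma Psi_continuous (hp : 0 < p) {w : En n → ℝ} (hw : ContDiff ℝ 1 w)
    (hwc : HasCompactSupport w) : Continuous fun ξ : unitSphere n => Psi n p Ω w ξ := by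
  show Continuous fun ξ : unitSphere n => ∫ x in Ω, |fderiv ℝ w x (ξ : En n)| ^ p
  refine MeasureTheory.continuous_of_dominated
    (F := fun (ξ : unitSphere n) (x : En n) => |fderiv ℝ w x (ξ : En n)| ^ p)
    (bound := fun x => ‖fderiv ℝ w x‖ ^ p) (fun ξ => ?_) (fun ξ => ?_)
    (integrable_norm_fderiv_rpow hp hw hwc) ?_
  · exact ((cont_abs_rpow hp.le).comp (cont_dirDeriv hw _)).aestronglyMeasurable
  · refine Filter.Eventually.of_forall fun x => ?_
    rw [Real.norm_eq_abs, abs_of_nonneg (Real.rpow_nonneg (abs_nonneg _) p)]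
    exact Real.rpow_le_rpow (abs_nonneg _) (abs_fderiv_apply_le x ξ) hp.le
  · refine Filter.Eventually.of_forall fun x => ?_
    exact (cont_abs_rpow hp.le).comp ((fderiv ℝ w x).continuous.comp continuous_subtype_val)

end Aux
section Aux2

variable {n : ℕ} {p q : ℝ} {Ω : Set (En n)}

/-- `gfun p a = |a|^(p-2) * a`, the dual power function. -/
def gfun (p a : ℝ) : ℝ := |a| ^ (p - 2) * a

lemma gfun_abs (hp : 1 < p) (a : ℝ) : |gfun p a| = |a| ^ (p - 1) := by
  rcases eq_or_ne a 0 with rfl | ha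
  · simp [gfun, Real.zero_rpow (by linarith : p - 1 ≠ 0)]
  · have h0 : (0 : ℝ) < |a| := abs_pos.mpr ha
    rw [gfun, abs_mul, abs_of_nonneg (Real.rpow_nonneg (abs_nonneg a) _)]
    have e1 := Real.rpow_add h0 (p - 2) 1
    rw [Real.rpow_one] at e1
    rw [← e1]; congr 1; ring

lemma gfun_mul_self (hp : 1 < p) (a : ℝ) : gfun p a * a = |a| ^ p := by
  rcases eq_or_ne a 0 with rfl | ha
  · simp [gfun, Real.zero_rpow (by linarith : p ≠ 0)]
  · have h0 : (0 : ℝ) < |a| := abs_pos.mpr ha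
    have e1 := Real.rpow_add h0 (p - 2) 2
    have e2 : |a| ^ (2:ℝ) = |a| * |a| := by
      rw [show ((2:ℝ)) = ((2:ℕ):ℝ) by norm_num, Real.rpow_natCast, pow_two]
    rw [gfun, mul_assoc, ← abs_mul_abs_self, ← e2, ← e1]
    congr 1; ring

lemma gfun_continuous (hp : 1 < p) : Continuous (gfun p) := by
  rw [continuous_iff_continuousAt]
  intro a
  rcases eq_or_ne a 0 with rfl | ha
  · have h1 : Tendsto (fun t : ℝ => |t| ^ (p - 1)) (nhds 0) (nhds 0) := by
      have := (cont_abs_rpow (p := p - 1) (by linarith)).tendsto 0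
      simpa [Real.zero_rpow (by linarith : p - 1 ≠ 0)] using this
    have h2 : Tendsto (gfun p) (nhds 0) (nhds 0) :=
      squeeze_zero_norm (fun t => by rw [Real.norm_eq_abs, gfun_abs hp]) h1
    have h3 : gfun p 0 = 0 := by simp [gfun]
    rw [ContinuousAt, h3]; exact h2
  · have h0 : |a| ≠ 0 := abs_ne_zero.mpr ha
    exact ((Real.continuousAt_rpow_const _ _ (Or.inl h0)).comp
      continuous_abs.continuousAt).mul continuousAt_id

lemma gfun_hcs (hp : 1 < p) {f : En n → ℝ} (hf : HasCompactSupport f) :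
    HasCompactSupport fun x => gfun p (f x) :=
  hf.comp_left (g := gfun p) (by simp [gfun])

lemma abs_integral_le (f : En n → ℝ) : |∫ x in Ω, f x| ≤ ∫ x in Ω, |f x| := by
  rw [← Real.norm_eq_abs]
  refine (MeasureTheory.norm_integral_le_integral_norm f).trans (le_of_eq ?_)
  simp [Real.norm_eq_abs]

/-- Hölder for a directional derivative against a test function. -/
lemma holder_dir (hp : 1 < p) (hq : q = p / (p - 1)) {w g : En n → ℝ}
    (hw : ContDiff ℝ 1 w) (hwc : HasCompactSupport w)
    (hg : Continuous g) (hgc : HasCompactSupport g) (ξ : unitSphere n) :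
    |∫ x in Ω, g x * fderiv ℝ w x (ξ : En n)| ≤
      (Psi n p Ω w ξ) ^ (1 / p) * (∫ x in Ω, |g x| ^ q) ^ (1 / q) := by
  have hpq : p.HolderConjugate q := (Real.holderConjugate_iff_eq_conjExponent hp).2 hq
  have h1 : |∫ x in Ω, g x * fderiv ℝ w x (ξ : En n)| ≤
      ∫ x in Ω, |fderiv ℝ w x (ξ : En n)| * |g x| := by
    refine (abs_integral_le _).trans (le_of_eq ?_)
    refine MeasureTheory.integral_congr_ae (Filter.Eventually.of_forall fun x => ?_)
    simp only [abs_mul]; ring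
  refine h1.trans ?_
  have hmem1 : MeasureTheory.MemLp (fun x => |fderiv ℝ w x (ξ : En n)|)
      (ENNReal.ofReal p) (volume.restrict Ω) :=
    (((cont_dirDeriv hw _).abs).memLp_of_hasCompactSupport
      ((hcs_dirDeriv hwc _).comp_left (g := fun t : ℝ => |t|) abs_zero)).restrict Ω
  have hmem2 : MeasureTheory.MemLp (fun x => |g x|) (ENNReal.ofReal q) (volume.restrict Ω) :=
    ((hg.abs).memLp_of_hasCompactSupport
      (hgc.comp_left (g := fun t : ℝ => |t|) abs_zero)).restrict Ω
  have h2 := MeasureTheory.integral_mul_le_Lp_mul_Lq_of_nonneg hpq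
    (Filter.Eventually.of_forall fun x => abs_nonneg _)
    (Filter.Eventually.of_forall fun x => abs_nonneg _) hmem1 hmem2
  simpa [Psi] using h2

/-- Hölder for a full gradient pairing against a test function. -/
lemma holder_grad (hp : 1 < p) (hq : q = p / (p - 1)) {w g : En n → ℝ}
    (hw : ContDiff ℝ 1 w) (hwc : HasCompactSupport w)
    (hg : Continuous g) (hgc : HasCompactSupport g) (v : En n) :
    |∫ x in Ω, g x * fderiv ℝ w x v| ≤
      ‖v‖ * ((∫ x in Ω, ‖fderiv ℝ w x‖ ^ p) ^ (1 / p) * (∫ x in Ω, |g x| ^ q) ^ (1 / q)) := by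
  have hpq : p.HolderConjugate q := (Real.holderConjugate_iff_eq_conjExponent hp).2 hq
  have hint1 : Integrable (fun x => |g x * fderiv ℝ w x v|) (volume.restrict Ω) := by
    have hc : Continuous fun x => |g x * fderiv ℝ w x v| :=
      (hg.mul (cont_dirDeriv hw v)).abs
    have hcs : HasCompactSupport fun x => g x * fderiv ℝ w x v := hgc.mul_right
    exact ((hg.mul (cont_dirDeriv hw v)).abs.integrable_of_hasCompactSupport
      (hcs.comp_left (g := fun t : ℝ => |t|) abs_zero)).restrict
  have hint2 : Integrable (fun x => ‖fderiv ℝ w x‖ * (‖v‖ * |g x|)) (volume.restrict Ω) := by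
    have hc : Continuous fun x => ‖fderiv ℝ w x‖ * (‖v‖ * |g x|) :=
      ((cont_fderiv hw).norm).mul (continuous_const.mul hg.abs)
    have hcs : HasCompactSupport fun x => ‖fderiv ℝ w x‖ * (‖v‖ * |g x|) :=
      ((hwc.fderiv (𝕜 := ℝ)).comp_left (g := fun L : En n →L[ℝ] ℝ => ‖L‖) norm_zero).mul_right
    exact (hc.integrable_of_hasCompactSupport hcs).restrict
  have h1 : |∫ x in Ω, g x * fderiv ℝ w x v| ≤ ∫ x in Ω, ‖fderiv ℝ w x‖ * (‖v‖ * |g x|) := by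
    refine (abs_integral_le _).trans ?_
    refine MeasureTheory.setIntegral_mono hint1 hint2 fun x => ?_
    rw [abs_mul]
    calc |g x| * |fderiv ℝ w x v| ≤ |g x| * (‖fderiv ℝ w x‖ * ‖v‖) :=
          mul_le_mul_of_nonneg_left ((fderiv ℝ w x).le_opNorm v) (abs_nonneg _)
      _ = ‖fderiv ℝ w x‖ * (‖v‖ * |g x|) := by ring
  refine h1.trans ?_
  have h2 : ∫ x in Ω, ‖fderiv ℝ w x‖ * (‖v‖ * |g x|) = ‖v‖ * ∫ x in Ω, ‖fderiv ℝ w x‖ * |g x| := by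
    rw [← MeasureTheory.integral_const_mul]
    refine MeasureTheory.integral_congr_ae (Filter.Eventually.of_forall fun x => ?_)
    ring
  rw [h2]
  refine mul_le_mul_of_nonneg_left ?_ (norm_nonneg v)
  have hmem1 : MeasureTheory.MemLp (fun x => ‖fderiv ℝ w x‖)
      (ENNReal.ofReal p) (volume.restrict Ω) :=
    (((cont_fderiv hw).norm).memLp_of_hasCompactSupport
      ((hwc.fderiv (𝕜 := ℝ)).comp_left (g := fun L : En n →L[ℝ] ℝ => ‖L‖) norm_zero)).restrict Ω
  have hmem2 : MeasureTheory.MemLp (fun x => |g x|) (ENNReal.ofReal q) (volume.restrict Ω) :=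
    ((hg.abs).memLp_of_hasCompactSupport
      (hgc.comp_left (g := fun t : ℝ => |t|) abs_zero)).restrict Ω
  have h3 := MeasureTheory.integral_mul_le_Lp_mul_Lq_of_nonneg hpq
    (Filter.Eventually.of_forall fun x => norm_nonneg _)
    (Filter.Eventually.of_forall fun x => abs_nonneg _) hmem1 hmem2
  simpa using h3

end Aux2
section Aux3

variable {n : ℕ} {p q : ℝ} {Ω : Set (En n)}

lemma gfun_abs_rpow_q (hp : 1 < p) (hq : q = p / (p - 1)) (a : ℝ) :
    |gfun p a| ^ q = |a| ^ p := by
  rw [gfun_abs hp, ← Real.rpow_mul (abs_nonneg a)]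
  congr 1
  have h1 : p - 1 ≠ 0 := by linarith
  rw [hq]; field_simp

/-- Weak convergence tested against the dual function of `∂_{ξ₀} u₀`. -/
lemma main_dual (hp : 1 < p) (hq : q = p / (p - 1))
    (u : ℕ → En n → ℝ) (u₀ : En n → ℝ)
    (hu : ∀ k, ContDiff ℝ 1 (u k)) (hu₀ : ContDiff ℝ 1 u₀) (hcs₀ : HasCompactSupport u₀)
    (hweak : ∀ V : En n → En n, Measurable V →
      (∫⁻ x in Ω, ENNReal.ofReal (‖V x‖ ^ (p / (p - 1)))) < ⊤ →
      Tendsto (fun k => ∫ x in Ω, fderiv ℝ (u k) x (V x)) atTop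
        (nhds (∫ x in Ω, fderiv ℝ u₀ x (V x))))
    (ξ₀ : unitSphere n) :
    Tendsto (fun k => ∫ x in Ω,
        gfun p (fderiv ℝ u₀ x (ξ₀ : En n)) * fderiv ℝ (u k) x (ξ₀ : En n)) atTop
      (nhds (Psi n p Ω u₀ ξ₀)) := by
  have hp0 : (0 : ℝ) < p := by linarith
  set f : En n → ℝ := fun x => fderiv ℝ u₀ x (ξ₀ : En n) with hf
  set g : En n → ℝ := fun x => gfun p (f x) with hg
  have hgC : Continuous g := (gfun_continuous hp).comp (cont_dirDeriv hu₀ _)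
  set V : En n → En n := fun x => g x • (ξ₀ : En n) with hV
  have hVmeas : Measurable V := hgC.measurable.smul_const _
  have hVint : (∫⁻ x in Ω, ENNReal.ofReal (‖V x‖ ^ (p / (p - 1)))) < ⊤ := by
    have heq : ∀ x, ENNReal.ofReal (‖V x‖ ^ (p / (p - 1))) =
        ‖(|f x| ^ p : ℝ)‖ₑ := by
      intro x
      rw [hV]
      simp only
      rw [norm_smul, coe_sphere_norm, mul_one, Real.norm_eq_abs,
        ← hq, gfun_abs_rpow_q hp hq, Real.enorm_eq_ofReal
          (Real.rpow_nonneg (abs_nonneg _) _)]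
    calc (∫⁻ x in Ω, ENNReal.ofReal (‖V x‖ ^ (p / (p - 1))))
        = ∫⁻ x in Ω, ‖(|f x| ^ p : ℝ)‖ₑ :=
          MeasureTheory.lintegral_congr fun x => heq x
      _ < ⊤ := (integrable_abs_rpow_dirDeriv hp0 hu₀ hcs₀ (ξ₀ : En n)).2
  have hW := hweak V hVmeas hVint
  have hk : ∀ w : En n → ℝ, (∫ x in Ω, fderiv ℝ w x (V x)) =
      ∫ x in Ω, g x * fderiv ℝ w x (ξ₀ : En n) := by
    intro w
    refine MeasureTheory.integral_congr_ae (Filter.Eventually.of_forall fun x => ?_)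
    simp only [hV, _root_.map_smul, smul_eq_mul]
  have h0 : (∫ x in Ω, fderiv ℝ u₀ x (V x)) = Psi n p Ω u₀ ξ₀ := by
    rw [hk u₀]
    simp only [Psi]
    refine MeasureTheory.integral_congr_ae (Filter.Eventually.of_forall fun x => ?_)
    exact gfun_mul_self hp (f x)
  rw [h0] at hW
  have hfun : (fun k => ∫ x in Ω, fderiv ℝ (u k) x (V x)) =
      fun k => ∫ x in Ω, g x * fderiv ℝ (u k) x (ξ₀ : En n) := funext fun k => hk (u k)
  rw [hfun] at hW
  exact hW

end Aux3
section Aux4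

variable {n : ℕ} {p q : ℝ} {Ω : Set (En n)}

/-- Lower semicontinuity of `Ψ_ξ` under weak convergence: quantitative form. -/
lemma lsc_eventually (hp : 1 < p) (hq : q = p / (p - 1))
    (u : ℕ → En n → ℝ) (u₀ : En n → ℝ)
    (hu : ∀ k, ContDiff ℝ 1 (u k)) (hcs : ∀ k, HasCompactSupport (u k))
    (hu₀ : ContDiff ℝ 1 u₀) (hcs₀ : HasCompactSupport u₀)
    (hweak : ∀ V : En n → En n, Measurable V →
      (∫⁻ x in Ω, ENNReal.ofReal (‖V x‖ ^ (p / (p - 1)))) < ⊤ →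
      Tendsto (fun k => ∫ x in Ω, fderiv ℝ (u k) x (V x)) atTop
        (nhds (∫ x in Ω, fderiv ℝ u₀ x (V x))))
    (ξ₀ : unitSphere n) {ε : ℝ} (hε : 0 < ε) :
    ∀ᶠ k in atTop, Psi n p Ω u₀ ξ₀ - ε < Psi n p Ω (u k) ξ₀ := by
  have hp0 : (0 : ℝ) < p := by linarith
  set A := Psi n p Ω u₀ ξ₀ with hA
  rcases lt_or_ge A ε with hcase | hcase
  · exact Filter.Eventually.of_forall fun k =>
      lt_of_lt_of_le (by linarith) (Psi_nonneg _ _)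
  have hA0 : 0 < A := lt_of_lt_of_le hε hcase
  set f : En n → ℝ := fun x => fderiv ℝ u₀ x (ξ₀ : En n) with hf
  set g : En n → ℝ := fun x => gfun p (f x) with hg
  have hgC : Continuous g := (gfun_continuous hp).comp (cont_dirDeriv hu₀ _)
  have hgCS : HasCompactSupport g := gfun_hcs hp (hcs_dirDeriv hcs₀ _)
  have hGA : (∫ x in Ω, |g x| ^ q) = A := by
    rw [hA]; simp only [Psi]
    exact MeasureTheory.integral_congr_ae
      (Filter.Eventually.of_forall fun x => gfun_abs_rpow_q hp hq (f x))
  -- choose ε''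
  have hval : (A - ε) * A ^ (p - 1) < A ^ p := by
    have e1 := Real.rpow_add hA0 1 (p - 1)
    rw [Real.rpow_one] at e1
    have e2 : A ^ p = A * A ^ (p - 1) := by rw [← e1]; congr 1; ring
    rw [e2]
    exact mul_lt_mul_of_pos_right (by linarith) (Real.rpow_pos_of_pos hA0 _)
  have hcont : ContinuousAt (fun t : ℝ => (A - t) ^ p) 0 := by
    refine ContinuousAt.rpow_const ((continuous_const.sub continuous_id).continuousAt) ?_
    exact Or.inr hp0.le
  have hev : ∀ᶠ t in nhds (0 : ℝ), (A - ε) * A ^ (p - 1) < (A - t) ^ p ∧ t < A := by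
    have hc0 : (A - (0:ℝ)) ^ p = A ^ p := by norm_num
    have hcont' : Tendsto (fun t : ℝ => (A - t) ^ p) (nhds 0) (nhds (A ^ p)) := by
      have h0 := hcont.tendsto
      simpa using h0
    have h1 : ∀ᶠ t in nhds (0 : ℝ), (A - ε) * A ^ (p - 1) < (A - t) ^ p :=
      hcont'.eventually (eventually_gt_nhds hval)
    exact h1.and (eventually_lt_nhds hA0)
  obtain ⟨δ, hδ0, hδ⟩ := Metric.eventually_nhds_iff.mp hev
  have hmemδ : dist (δ/2) (0:ℝ) < δ := by
    rw [Real.dist_eq, sub_zero, abs_of_pos (by linarith)]; linarith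
  obtain ⟨h1'', h2''⟩ := hδ hmemδ
  set ε'' := δ/2 with hε''
  have hε''0 : 0 < ε'' := by rw [hε'']; linarith
  -- eventual bound from main_dual
  have hMD := main_dual (Ω := Ω) hp hq u u₀ hu hu₀ hcs₀ hweak ξ₀
  have hevk : ∀ᶠ k in atTop, A - ε'' <
      ∫ x in Ω, g x * fderiv ℝ (u k) x (ξ₀ : En n) :=
    hMD.eventually (eventually_gt_nhds (by linarith : A - ε'' < A))
  filter_upwards [hevk] with k hk
  have hH := holder_dir (Ω := Ω) hp hq (hu k) (hcs k) hgC hgCS ξ₀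
  rw [hGA] at hH
  have h5 : A - ε'' ≤ (Psi n p Ω (u k) ξ₀) ^ (1/p) * A ^ (1/q) :=
    le_trans hk.le ((le_abs_self _).trans hH)
  have hq1 : (0:ℝ) < A ^ (1/q) := Real.rpow_pos_of_pos hA0 _
  have h6 : (A - ε'') / A ^ (1/q) ≤ (Psi n p Ω (u k) ξ₀) ^ (1/p) :=
    (div_le_iff₀ hq1).mpr h5
  have h7 : ((A - ε'') / A ^ (1/q)) ^ p ≤ ((Psi n p Ω (u k) ξ₀) ^ (1/p)) ^ p :=
    Real.rpow_le_rpow (div_nonneg (by linarith) hq1.le) h6 hp0.le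
  have h8 : ((Psi n p Ω (u k) ξ₀) ^ (1/p)) ^ p = Psi n p Ω (u k) ξ₀ := by
    rw [← Real.rpow_mul (Psi_nonneg _ _), show 1/p*p = 1 by field_simp, Real.rpow_one]
  have h9 : ((A - ε'') / A ^ (1/q)) ^ p = (A - ε'') ^ p / A ^ (p - 1) := by
    rw [Real.div_rpow (by linarith) hq1.le]
    congr 1
    rw [← Real.rpow_mul hA0.le]
    congr 1
    have h1 : p - 1 ≠ 0 := by linarith
    have h2 : p ≠ 0 := by linarith
    rw [hq]; field_simp
  have h10 : A - ε < (A - ε'') ^ p / A ^ (p - 1) := by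
    rw [lt_div_iff₀ (Real.rpow_pos_of_pos hA0 _)]
    exact h1''
  rw [h9, h8] at h7
  exact lt_of_lt_of_le h10 h7

end Aux4
section Aux5

variable {n : ℕ} {p q : ℝ} {Ω : Set (En n)}

lemma dir_deriv_zero_everywhere (hΩo : IsOpen Ω) (hp0 : 0 < p) {w : En n → ℝ}
    (hw : ContDiff ℝ 1 w) (hwc : HasCompactSupport w) (hsupp : tsupport w ⊆ Ω)
    (ξ₀ : unitSphere n) (hP : Psi n p Ω w ξ₀ = 0) :
    ∀ y, fderiv ℝ w y (ξ₀ : En n) = 0 := by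
  intro y
  by_cases hyΩ : y ∈ Ω
  · by_contra hne
    set h : En n → ℝ := fun x => |fderiv ℝ w x (ξ₀ : En n)| ^ p with hh
    have hhc : Continuous h := (cont_abs_rpow hp0.le).comp (cont_dirDeriv hw _)
    have hy : 0 < h y := Real.rpow_pos_of_pos (abs_pos.mpr hne) p
    have hopen : IsOpen {x | h y / 2 < h x} := isOpen_lt continuous_const hhc
    obtain ⟨r, hr0, hball⟩ := Metric.isOpen_iff.mp (hopen.inter hΩo) y
      ⟨by simpa using by linarith, hyΩ⟩
    have hsub : Metric.ball y r ⊆ Ω := fun z hz => (hball hz).2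
    have hint : MeasureTheory.IntegrableOn h Ω volume :=
      integrable_abs_rpow_dirDeriv hp0 hw hwc _
    have hmono : (∫ x in Metric.ball y r, h x) ≤ ∫ x in Ω, h x :=
      MeasureTheory.setIntegral_mono_set hint
        (Filter.Eventually.of_forall fun x => Real.rpow_nonneg (abs_nonneg _) _)
        (Filter.Eventually.of_forall hsub)
    have hlow : (h y / 2) * (volume (Metric.ball y r)).toReal ≤
        ∫ x in Metric.ball y r, h x :=
      by
        have := MeasureTheory.setIntegral_ge_of_const_le measurableSet_ball
          measure_ball_lt_top.ne (fun x hx => (hball hx).1.le) (hint.mono_set hsub)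
        rw [smul_eq_mul, mul_comm] at this
        exact this
    have hpos : 0 < (volume (Metric.ball y r)).toReal :=
      ENNReal.toReal_pos (measure_ball_pos volume y hr0).ne' measure_ball_lt_top.ne
    have hfinal : 0 < ∫ x in Ω, h x :=
      lt_of_lt_of_le (mul_pos (by linarith) hpos) (hlow.trans hmono)
    have hPsi : Psi n p Ω w ξ₀ = ∫ x in Ω, h x := rfl
    rw [hPsi] at hP
    rw [hP] at hfinal
    exact lt_irrefl 0 hfinal
  · have hmem : y ∉ tsupport w := fun hmem => hyΩ (hsupp hmem)
    have hz : fderiv ℝ w y = 0 := by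
      by_contra hne
      exact hmem (support_fderiv_subset ℝ (Function.mem_support.mpr hne))
    rw [hz]; rfl

lemma zero_of_dir_deriv_zero {w : En n → ℝ} (hw : ContDiff ℝ 1 w)
    (hwc : HasCompactSupport w) (ξ₀ : unitSphere n)
    (hd : ∀ y, fderiv ℝ w y (ξ₀ : En n) = 0) : ∀ x, w x = 0 := by
  intro x
  set φ : ℝ → ℝ := fun t => w (x + t • (ξ₀ : En n)) with hφ
  have hdiff : ∀ t, HasDerivAt φ 0 t := by
    intro t
    have h1 : HasDerivAt (fun s : ℝ => x + s • (ξ₀ : En n)) (ξ₀ : En n) t := by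
      have h0 := (hasDerivAt_id t).smul_const (ξ₀ : En n)
      simpa using h0.const_add x
    have h2 : HasFDerivAt w (fderiv ℝ w (x + t • (ξ₀ : En n))) (x + t • (ξ₀ : En n)) :=
      (hw.differentiable one_ne_zero _).hasFDerivAt
    have h3 := h2.comp_hasDerivAt t h1
    simpa [hd, hφ, Function.comp_def] using h3
  have hconst := is_const_of_deriv_eq_zero (𝕜 := ℝ)
    (fun t => (hdiff t).differentiableAt) (fun t => (hdiff t).deriv)
  obtain ⟨R₀, hR₀⟩ := hwc.isBounded.subset_closedBall 0
  set R := max R₀ 0 with hRdef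
  have hR : tsupport w ⊆ Metric.closedBall 0 R :=
    hR₀.trans (Metric.closedBall_subset_closedBall (le_max_left _ _))
  set T := R + ‖x‖ + 1 with hT
  have hTpos : 0 < T := by
    have : (0:ℝ) ≤ R := le_max_right _ _
    have := norm_nonneg x
    rw [hT]; linarith
  have hout : x + T • (ξ₀ : En n) ∉ tsupport w := by
    intro hmem
    have h3 : ‖x + T • (ξ₀ : En n)‖ ≤ R := mem_closedBall_zero_iff.mp (hR hmem)
    have h4 : ‖T • (ξ₀ : En n)‖ ≤ ‖x + T • (ξ₀ : En n)‖ + ‖x‖ := by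
      have e : (x + T • (ξ₀ : En n)) - x = T • (ξ₀ : En n) := add_sub_cancel_left x _
      calc ‖T • (ξ₀ : En n)‖ = ‖(x + T • (ξ₀ : En n)) - x‖ := by rw [e]
        _ ≤ ‖x + T • (ξ₀ : En n)‖ + ‖x‖ := norm_sub_le _ _
    have h5 : ‖T • (ξ₀ : En n)‖ = T := by
      rw [norm_smul, coe_sphere_norm, mul_one, Real.norm_eq_abs, abs_of_pos hTpos]
    rw [h5, hT] at h4
    linarith
  calc w x = φ 0 := by simp [hφ]
    _ = φ T := hconst 0 T
    _ = 0 := by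
        show w (x + T • (ξ₀ : En n)) = 0
        exact image_eq_zero_of_notMem_tsupport hout

lemma ennrpow_anti {c : ℝ} (hc : 0 ≤ c) {x y : ℝ≥0∞} (h : x ≤ y) :
    y ^ (-c) ≤ x ^ (-c) := by
  rw [ENNReal.rpow_neg, ENNReal.rpow_neg]
  exact ENNReal.inv_le_inv.mpr (ENNReal.rpow_le_rpow h hc)

lemma enn_lt_of_lt_rpow {m : ℝ} (hm : 0 < m) {x y : ℝ≥0∞}
    (h : y < x ^ (-(1/m))) : x < y ^ (-m) := by
  rw [ENNReal.rpow_neg] at h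
  have h2 : x ^ (1/m) < y⁻¹ := ENNReal.lt_inv_iff_lt_inv.mp h
  have h3 : (x ^ (1/m)) ^ m < (y⁻¹) ^ m := ENNReal.rpow_lt_rpow h2 hm
  rw [← ENNReal.rpow_mul, one_div_mul_cancel hm.ne', ENNReal.rpow_one,
    ENNReal.inv_rpow, ← ENNReal.rpow_neg] at h3
  exact h3

lemma enn_le_rpow_of_le {m : ℝ} (hm : 0 < m) {x y : ℝ≥0∞}
    (h : x ≤ y ^ (-m)) : y ≤ x ^ (-(1/m)) := by
  have h3 : x ^ (1/m) ≤ (y ^ (-m)) ^ (1/m) :=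
    ENNReal.rpow_le_rpow h (by positivity)
  rw [← ENNReal.rpow_mul, show (-m) * (1/m) = -1 by field_simp, ENNReal.rpow_neg_one] at h3
  rw [ENNReal.rpow_neg]
  exact ENNReal.le_inv_iff_le_inv.mp h3

lemma le_liminf_aux {v : ℕ → ℝ} {a : ℝ}
    (hco : Filter.IsCoboundedUnder (· ≥ ·) atTop v)
    (h : ∀ r < a, ∀ᶠ k in atTop, r ≤ v k) : a ≤ atTop.liminf v := by
  by_contra hcon
  push_neg at hcon
  obtain ⟨r, hr1, hr2⟩ := exists_between hcon
  exact absurd (Filter.le_liminf_of_le hco (h r hr2)) (not_le.mpr hr1)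

lemma alphanp_nonneg {e₁ : En n} : 0 ≤ alphanp n p e₁ := by
  refine mul_nonneg (Real.rpow_nonneg ?_ _) (Real.rpow_nonneg ?_ _)
  · exact mul_nonneg (Nat.cast_nonneg n) ENNReal.toReal_nonneg
  · exact MeasureTheory.integral_nonneg fun ξ => Real.rpow_nonneg (abs_nonneg _) _

lemma affineEnergy_nonneg {e₁ : En n} (w : En n → ℝ) :
    0 ≤ affineEnergy n p e₁ Ω w :=
  mul_nonneg alphanp_nonneg ENNReal.toReal_nonneg

end Aux5
set_option maxHeartbeats 1000000 in
/-- Theorem 6 (weak lower semicontinuity of the affine energy, `C¹` form):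
if the gradients of `u_k` are bounded in `L^p(Ω)` and converge weakly in `L^p`
to the gradient of `u₀`, then `E_{p,Ω}(u₀) ≤ liminf_k E_{p,Ω}(u_k)`. -/
theorem statement3 (n : ℕ) (hn : 2 ≤ n) (p : ℝ) (hp1 : 1 < p) (hpn : p < n)
    (Ω : Set (En n)) (hΩo : IsOpen Ω) (hΩb : Bornology.IsBounded Ω)
    (e₁ : En n) (he₁ : ‖e₁‖ = 1)
    (u : ℕ → En n → ℝ) (u₀ : En n → ℝ)
    (hu : ∀ k, ContDiff ℝ 1 (u k)) (hcs : ∀ k, HasCompactSupport (u k))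
    (hsupp : ∀ k, tsupport (u k) ⊆ Ω)
    (hu₀ : ContDiff ℝ 1 u₀) (hcs₀ : HasCompactSupport u₀) (hsupp₀ : tsupport u₀ ⊆ Ω)
    (C : ℝ) (hbd : ∀ k, (∫ x in Ω, ‖fderiv ℝ (u k) x‖ ^ p) ≤ C)
    (hweak : ∀ V : En n → En n, Measurable V →
      (∫⁻ x in Ω, ENNReal.ofReal (‖V x‖ ^ (p / (p - 1)))) < ⊤ →
      Tendsto (fun k => ∫ x in Ω, fderiv ℝ (u k) x (V x)) atTop
        (nhds (∫ x in Ω, fderiv ℝ u₀ x (V x)))) :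
    affineEnergy n p e₁ Ω u₀ ≤
      atTop.liminf (fun k => affineEnergy n p e₁ Ω (u k)) := by
  have hp0 : (0:ℝ) < p := by linarith
  have hn0 : (0:ℝ) < (n:ℝ) := by exact_mod_cast (by omega : 0 < n)
  have hnp : (0:ℝ) < (n:ℝ)/p := div_pos hn0 hp0
  have h1n : (0:ℝ) < 1/(n:ℝ) := one_div_pos.mpr hn0
  -- sphere measure facts
  have hσ0 : sphereMeasure n Set.univ ≠ 0 := by
    show (volume : Measure (En n)).toSphere Set.univ ≠ 0
    rw [MeasureTheory.Measure.toSphere_apply_univ, finrank_euclideanSpace_fin]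
    exact mul_ne_zero (by exact_mod_cast (by omega : n ≠ 0))
      (measure_ball_pos _ _ one_pos).ne'
  have hσfin : sphereMeasure n Set.univ ≠ ⊤ := by
    show (volume : Measure (En n)).toSphere Set.univ ≠ ⊤
    exact measure_ne_top _ _
  -- the functionals
  set F : ℕ → unitSphere n → ℝ≥0∞ :=
    fun k ξ => ENNReal.ofReal (Psi n p Ω (u k) ξ) ^ (-((n:ℝ)/p)) with hF
  set F₀ : unitSphere n → ℝ≥0∞ :=
    fun ξ => ENNReal.ofReal (Psi n p Ω u₀ ξ) ^ (-((n:ℝ)/p)) with hF₀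
  set J : ℕ → ℝ≥0∞ := fun k => ∫⁻ ξ, F k ξ ∂(sphereMeasure n) with hJ
  set J₀ : ℝ≥0∞ := ∫⁻ ξ, F₀ ξ ∂(sphereMeasure n) with hJ₀
  have hEk : ∀ k, affineEnergy n p e₁ Ω (u k) =
      alphanp n p e₁ * ((J k) ^ (-(1/(n:ℝ)))).toReal := fun k => rfl
  have hE₀ : affineEnergy n p e₁ Ω u₀ =
      alphanp n p e₁ * (J₀ ^ (-(1/(n:ℝ)))).toReal := rfl
  have hFmeas : ∀ k, Measurable (F k) := fun k =>
    (ENNReal.continuous_rpow_const.comp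
      (ENNReal.continuous_ofReal.comp (Psi_continuous hp0 (hu k) (hcs k)))).measurable
  -- basic bounds
  have hC0 : 0 ≤ C :=
    le_trans (MeasureTheory.integral_nonneg fun x => Real.rpow_nonneg (norm_nonneg _) _)
      (hbd 0)
  have hPsiC : ∀ k ξ, Psi n p Ω (u k) ξ ≤ C := fun k ξ =>
    (Psi_le_total hp0 (hu k) (hcs k) ξ).trans (hbd k)
  have hFk_low : ∀ k ξ, (ENNReal.ofReal C) ^ (-((n:ℝ)/p)) ≤ F k ξ := fun k ξ =>
    ennrpow_anti hnp.le (ENNReal.ofReal_le_ofReal (hPsiC k ξ))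
  set c₀ : ℝ≥0∞ := (ENNReal.ofReal C) ^ (-((n:ℝ)/p)) * sphereMeasure n Set.univ with hc₀
  have hJlow : ∀ k, c₀ ≤ J k := by
    intro k
    calc c₀ = ∫⁻ _, (ENNReal.ofReal C) ^ (-((n:ℝ)/p)) ∂(sphereMeasure n) := by
          rw [MeasureTheory.lintegral_const]
      _ ≤ J k := MeasureTheory.lintegral_mono (hFk_low k)
  have hc₀pos : 0 < c₀ := by
    rw [hc₀, pos_iff_ne_zero]
    refine mul_ne_zero ?_ hσ0
    rw [Ne, ENNReal.rpow_eq_zero_iff]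
    rintro (⟨h1, h2⟩ | ⟨h1, h2⟩)
    · linarith
    · exact ENNReal.ofReal_ne_top h1
  have hJ0ne : ∀ k, J k ≠ 0 := fun k => (hc₀pos.trans_le (hJlow k)).ne'
  have hJpow_fin : ∀ k, (J k) ^ (-(1/(n:ℝ))) ≠ ⊤ := by
    intro k h
    rw [ENNReal.rpow_eq_top_iff] at h
    rcases h with ⟨h1, h2⟩ | ⟨h1, h2⟩
    · exact hJ0ne k h1
    · linarith
  have hc₀top : c₀ ^ (-(1/(n:ℝ))) ≠ ⊤ := by
    intro h
    rw [ENNReal.rpow_eq_top_iff] at h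
    rcases h with ⟨h1, h2⟩ | ⟨h1, h2⟩
    · exact hc₀pos.ne' h1
    · linarith
  have hEB : ∀ k, affineEnergy n p e₁ Ω (u k) ≤
      alphanp n p e₁ * (c₀ ^ (-(1/(n:ℝ)))).toReal := by
    intro k
    rw [hEk k]
    exact mul_le_mul_of_nonneg_left
      (ENNReal.toReal_mono hc₀top (ennrpow_anti h1n.le (hJlow k))) alphanp_nonneg
  have hco : Filter.IsCoboundedUnder (· ≥ ·) atTop
      (fun k => affineEnergy n p e₁ Ω (u k)) :=
    Filter.isCoboundedUnder_ge_of_le atTop hEB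
  -- main case distinction
  by_cases hdeg : ∃ ξ : unitSphere n, Psi n p Ω u₀ ξ ≤ 0
  · -- degenerate: u₀ ≡ 0 and the energy vanishes
    obtain ⟨ξ₀, hξ₀⟩ := hdeg
    have hP0 : Psi n p Ω u₀ ξ₀ = 0 := le_antisymm hξ₀ (Psi_nonneg _ _)
    have hzero : ∀ x, u₀ x = 0 := zero_of_dir_deriv_zero hu₀ hcs₀ ξ₀
      (dir_deriv_zero_everywhere hΩo hp0 hu₀ hcs₀ hsupp₀ ξ₀ hP0)
    have hPsi0 : ∀ ξ : unitSphere n, Psi n p Ω u₀ ξ = 0 := by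
      intro ξ
      have hu0fun : u₀ = fun _ => (0:ℝ) := funext hzero
      simp only [Psi, hu0fun]
      simp [Real.zero_rpow hp0.ne']
    have hEzero : affineEnergy n p e₁ Ω u₀ = 0 := by
      rw [hE₀]
      have htop : J₀ = ⊤ := by
        rw [hJ₀]
        have heach : ∀ ξ : unitSphere n, F₀ ξ = ⊤ := by
          intro ξ
          rw [hF₀]
          simp only
          rw [hPsi0 ξ, ENNReal.ofReal_zero, ENNReal.zero_rpow_of_neg (by linarith)]
        rw [MeasureTheory.lintegral_congr heach, MeasureTheory.lintegral_const,
          ENNReal.top_mul hσ0]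
      rw [htop, ENNReal.top_rpow_of_neg (by linarith)]
      simp
    rw [hEzero]
    exact le_liminf_aux hco fun r hr =>
      Filter.Eventually.of_forall fun k => hr.le.trans (affineEnergy_nonneg _)
  push_neg at hdeg
  by_cases hδex : ∃ δ : ℝ, 0 < δ ∧ ∀ᶠ k in atTop, ∀ ξ : unitSphere n, δ ≤ Psi n p Ω (u k) ξ
  · -- nondegenerate case: reverse Fatou
    obtain ⟨δ, hδ0, hδev⟩ := hδex
    obtain ⟨N, hN⟩ := Filter.eventually_atTop.mp hδev
    -- pointwise limsup bound
    have hpt : ∀ ξ : unitSphere n, Filter.limsup (fun k => F k ξ) atTop ≤ F₀ ξ := by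
      intro ξ
      have hA : 0 < Psi n p Ω u₀ ξ := hdeg ξ
      set A := Psi n p Ω u₀ ξ with hAdef
      have hm : ∀ M : ℕ, Filter.limsup (fun k => F k ξ) atTop ≤
          (ENNReal.ofReal (A - A/(M+1))) ^ (-((n:ℝ)/p)) := by
        intro M
        have hev := lsc_eventually (Ω := Ω) hp1 rfl u u₀ hu hcs hu₀ hcs₀ hweak ξ
          (ε := A/(M+1)) (by positivity)
        refine Filter.limsup_le_of_le (by isBoundedDefault) ?_
        filter_upwards [hev] with k hk
        exact ennrpow_anti hnp.le (ENNReal.ofReal_le_ofReal hk.le)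
      have htend : Tendsto (fun M : ℕ => (ENNReal.ofReal (A - A/(M+1))) ^ (-((n:ℝ)/p)))
          atTop (nhds ((ENNReal.ofReal A) ^ (-((n:ℝ)/p)))) := by
        have t1 : Tendsto (fun M : ℕ => A/((M:ℝ)+1)) atTop (nhds 0) := by
          have h0 := tendsto_one_div_add_atTop_nhds_zero_nat.const_mul A
          simpa [div_eq_mul_inv] using h0
        have t0 : Tendsto (fun M : ℕ => A - A/((M:ℝ)+1)) atTop (nhds A) := by
          simpa using tendsto_const_nhds.sub t1
        exact (ENNReal.continuous_rpow_const.tendsto _).comp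
          ((ENNReal.continuous_ofReal.tendsto _).comp t0)
      exact ge_of_tendsto' htend hm
    -- reverse Fatou on the shifted sequence
    have hrev : Filter.limsup J atTop ≤ J₀ := by
      have hgne : (ENNReal.ofReal δ) ^ (-((n:ℝ)/p)) ≠ ⊤ := by
        intro h
        rw [ENNReal.rpow_eq_top_iff] at h
        rcases h with ⟨h1, h2⟩ | ⟨h1, h2⟩
        · rw [ENNReal.ofReal_eq_zero] at h1; linarith
        · linarith
      have hkey := MeasureTheory.limsup_lintegral_le (μ := sphereMeasure n)
        (f := fun i ξ => F (i + N) ξ) (fun _ => (ENNReal.ofReal δ) ^ (-((n:ℝ)/p)))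
        (fun i => hFmeas (i + N))
        (fun i => Filter.Eventually.of_forall fun ξ =>
          ennrpow_anti hnp.le (ENNReal.ofReal_le_ofReal (hN (i+N) (by omega) ξ)))
        (by
          rw [MeasureTheory.lintegral_const]
          exact ENNReal.mul_ne_top hgne hσfin)
      calc Filter.limsup J atTop
          = Filter.limsup (fun i => J (i + N)) atTop := (Filter.limsup_nat_add J N).symm
        _ ≤ ∫⁻ ξ, Filter.limsup (fun i => F (i + N) ξ) atTop ∂(sphereMeasure n) := hkey
        _ = ∫⁻ ξ, Filter.limsup (fun k => F k ξ) atTop ∂(sphereMeasure n) :=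
            MeasureTheory.lintegral_congr fun ξ => Filter.limsup_nat_add (fun k => F k ξ) N
        _ ≤ J₀ := MeasureTheory.lintegral_mono hpt
    -- conclude
    refine le_liminf_aux hco ?_
    intro r hr
    rcases lt_or_ge r 0 with hr0 | hr0
    · exact Filter.Eventually.of_forall fun k => hr0.le.trans (affineEnergy_nonneg _)
    rw [hE₀] at hr
    have hα : 0 < alphanp n p e₁ := by
      rcases (alphanp_nonneg (n := n) (p := p) (e₁ := e₁)).lt_or_eq with h | h
      · exact h
      · exfalso; rw [← h, zero_mul] at hr; linarith
    have hs : r / alphanp n p e₁ < (J₀ ^ (-(1/(n:ℝ)))).toReal := by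
      rw [div_lt_iff₀ hα, mul_comm]
      exact hr
    have hs0 : 0 ≤ r / alphanp n p e₁ := div_nonneg hr0 hα.le
    rcases eq_or_lt_of_le hs0 with hseq | hspos
    · have hrzero : r = 0 := by
        rcases div_eq_zero_iff.mp hseq.symm with h | h
        · exact h
        · exact absurd h hα.ne'
      exact Filter.Eventually.of_forall fun k => hrzero ▸ affineEnergy_nonneg _
    have hTne : J₀ ^ (-(1/(n:ℝ))) ≠ ⊤ := by
      intro h
      rw [h, ENNReal.toReal_top] at hs
      linarith
    have hY : ENNReal.ofReal (r / alphanp n p e₁) < J₀ ^ (-(1/(n:ℝ))) :=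
      (ENNReal.ofReal_lt_iff_lt_toReal hs0 hTne).mpr hs
    have h2 : J₀ < (ENNReal.ofReal (r / alphanp n p e₁)) ^ (-(n:ℝ)) :=
      enn_lt_of_lt_rpow hn0 hY
    have hev := Filter.eventually_lt_of_limsup_lt (lt_of_le_of_lt hrev h2)
    filter_upwards [hev] with k hk
    have h3 : ENNReal.ofReal (r / alphanp n p e₁) ≤ (J k) ^ (-(1/(n:ℝ))) :=
      enn_le_rpow_of_le hn0 hk.le
    have h4 : r / alphanp n p e₁ ≤ ((J k) ^ (-(1/(n:ℝ)))).toReal := by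
      have h5 := ENNReal.toReal_mono (hJpow_fin k) h3
      rwa [ENNReal.toReal_ofReal hs0] at h5
    rw [hEk k]
    calc r = alphanp n p e₁ * (r / alphanp n p e₁) := by field_simp
      _ ≤ _ := mul_le_mul_of_nonneg_left h4 hα.le
  · -- degenerating directions: contradiction with positivity of Psi u₀
    exfalso
    push_neg at hδex
    have hsel : ∀ j : ℕ, ∃ k, j ≤ k ∧ ∃ ξ : unitSphere n,
        Psi n p Ω (u k) ξ < 1/(j+1) := by
      intro j
      have h1 := hδex (1/(j+1)) (by positivity)
      obtain ⟨k, hk1, hk2⟩ := (Filter.frequently_atTop.mp h1) j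
      obtain ⟨ξ, hξ⟩ := hk2
      exact ⟨k, hk1, ξ, hξ⟩
    choose K hK ξs hξs using hsel
    obtain ⟨ξ₀, -, φ, hφmono, hφtend⟩ :=
      (isCompact_univ (X := unitSphere n)).tendsto_subseq fun j => Set.mem_univ (ξs j)
    have hA₀ : 0 < Psi n p Ω u₀ ξ₀ := hdeg ξ₀
    set A₀ := Psi n p Ω u₀ ξ₀ with hA₀def
    set f : En n → ℝ := fun x => fderiv ℝ u₀ x (ξ₀ : En n) with hfdef
    set g : En n → ℝ := fun x => gfun p (f x) with hgdef
    have hgC : Continuous g := (gfun_continuous hp1).comp (cont_dirDeriv hu₀ _)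
    have hgCS : HasCompactSupport g := gfun_hcs hp1 (hcs_dirDeriv hcs₀ _)
    have hGA : (∫ x in Ω, |g x| ^ (p/(p-1))) = A₀ := by
      rw [hA₀def]
      simp only [Psi]
      exact MeasureTheory.integral_congr_ae
        (Filter.Eventually.of_forall fun x => gfun_abs_rpow_q hp1 rfl (f x))
    have hMD := main_dual (Ω := Ω) hp1 rfl u u₀ hu hu₀ hcs₀ hweak ξ₀
    have hKtend : Tendsto (fun i => K (φ i)) atTop atTop :=
      tendsto_atTop_mono (fun i => le_trans (hφmono.le_apply) (hK (φ i))) tendsto_id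
    have hI := hMD.comp hKtend
    set b : ℕ → ℝ := fun i =>
      ((1/((φ i : ℝ) + 1)) ^ (1/p) + ‖(ξ₀ : En n) - (ξs (φ i) : En n)‖ * C ^ (1/p)) *
        A₀ ^ (1/(p/(p-1))) with hbdef
    have hbnd : ∀ i, |∫ x in Ω, g x * fderiv ℝ (u (K (φ i))) x (ξ₀ : En n)| ≤ b i := by
      intro i
      have hint1 : Integrable (fun x => g x * fderiv ℝ (u (K (φ i))) x (ξs (φ i) : En n))
          (volume.restrict Ω) :=
        ((hgC.mul (cont_dirDeriv (hu _) _)).integrable_of_hasCompactSupport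
          hgCS.mul_right).restrict
      have hint2 : Integrable
          (fun x => g x * fderiv ℝ (u (K (φ i))) x ((ξ₀ : En n) - (ξs (φ i) : En n)))
          (volume.restrict Ω) :=
        ((hgC.mul (cont_dirDeriv (hu _) _)).integrable_of_hasCompactSupport
          hgCS.mul_right).restrict
      have hsplit : (∫ x in Ω, g x * fderiv ℝ (u (K (φ i))) x (ξ₀ : En n)) =
          (∫ x in Ω, g x * fderiv ℝ (u (K (φ i))) x (ξs (φ i) : En n)) +
          ∫ x in Ω, g x * fderiv ℝ (u (K (φ i))) x ((ξ₀ : En n) - (ξs (φ i) : En n)) := by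
        rw [← MeasureTheory.integral_add hint1 hint2]
        refine MeasureTheory.integral_congr_ae (Filter.Eventually.of_forall fun x => ?_)
        simp only [map_sub]
        ring
      have h1 : |∫ x in Ω, g x * fderiv ℝ (u (K (φ i))) x (ξs (φ i) : En n)| ≤
          (1/((φ i : ℝ)+1)) ^ (1/p) * A₀ ^ (1/(p/(p-1))) := by
        have hH := holder_dir (Ω := Ω) hp1 rfl (hu (K (φ i))) (hcs (K (φ i))) hgC hgCS
          (ξs (φ i))
        rw [hGA] at hH
        refine hH.trans ?_
        refine mul_le_mul_of_nonneg_right ?_ (Real.rpow_nonneg hA₀.le _)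
        exact Real.rpow_le_rpow (Psi_nonneg _ _) (hξs (φ i)).le (by positivity)
      have h2 : |∫ x in Ω, g x * fderiv ℝ (u (K (φ i))) x ((ξ₀ : En n) - (ξs (φ i) : En n))| ≤
          ‖(ξ₀ : En n) - (ξs (φ i) : En n)‖ * (C ^ (1/p) * A₀ ^ (1/(p/(p-1)))) := by
        have hH := holder_grad (Ω := Ω) hp1 rfl (hu (K (φ i))) (hcs (K (φ i))) hgC hgCS
          ((ξ₀ : En n) - (ξs (φ i) : En n))
        rw [hGA] at hH
        refine hH.trans ?_
        refine mul_le_mul_of_nonneg_left ?_ (norm_nonneg _)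
        refine mul_le_mul_of_nonneg_right ?_ (Real.rpow_nonneg hA₀.le _)
        exact Real.rpow_le_rpow
          (MeasureTheory.integral_nonneg fun x => Real.rpow_nonneg (norm_nonneg _) _)
          (hbd (K (φ i))) (by positivity)
      calc |∫ x in Ω, g x * fderiv ℝ (u (K (φ i))) x (ξ₀ : En n)|
          ≤ |∫ x in Ω, g x * fderiv ℝ (u (K (φ i))) x (ξs (φ i) : En n)| +
            |∫ x in Ω, g x * fderiv ℝ (u (K (φ i))) x ((ξ₀ : En n) - (ξs (φ i) : En n))| := by
            rw [hsplit]; exact abs_add_le _ _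
        _ ≤ b i := by
            rw [hbdef]
            have := add_le_add h1 h2
            refine this.trans (le_of_eq ?_)
            ring
    have hb0 : Tendsto b atTop (nhds 0) := by
      have hb1 : Tendsto (fun i => (1/((φ i : ℝ) + 1)) ^ (1/p)) atTop (nhds 0) := by
        have t1 : Tendsto (fun j : ℕ => 1/((j:ℝ)+1)) atTop (nhds 0) :=
          tendsto_one_div_add_atTop_nhds_zero_nat
        have t2 := t1.comp hφmono.tendsto_atTop
        have t3 : ContinuousAt (fun t : ℝ => t ^ (1/p)) 0 :=
          Real.continuousAt_rpow_const 0 _ (Or.inr (by positivity))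
        have t4 := t3.tendsto.comp t2
        simpa [Function.comp_def, one_div, Real.zero_rpow (show p⁻¹ ≠ 0 by positivity)] using t4
      have hb2 : Tendsto (fun i => ‖(ξ₀ : En n) - (ξs (φ i) : En n)‖) atTop (nhds 0) := by
        have t1 : Tendsto (fun i => (ξs (φ i) : En n)) atTop (nhds (ξ₀ : En n)) :=
          (continuous_subtype_val.tendsto ξ₀).comp hφtend
        have t2 := (tendsto_const_nhds (x := (ξ₀ : En n)) (f := atTop)).sub t1
        have t3 := t2.norm
        simpa using t3
      have hb3 := ((hb1.add (hb2.mul_const (C ^ (1/p)))).mul_const (A₀ ^ (1/(p/(p-1)))))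
      rw [hbdef]
      simpa using hb3
    have habs : Tendsto (fun i => |∫ x in Ω, g x * fderiv ℝ (u (K (φ i))) x (ξ₀ : En n)|)
        atTop (nhds |A₀|) := hI.abs
    have hfin : |A₀| ≤ 0 := le_of_tendsto_of_tendsto' habs hb0 hbnd
    have : A₀ ≤ 0 := (le_abs_self A₀).trans hfin
    linarith
end
end

section
/- (Uniform lower bound along sequences.) Let 1 ≤ p < n, let Ω ⊆ ℝⁿ be a bounded open set, let u_k (k ∈ ℕ) and u_0 be C¹ functions ℝⁿ → ℝ with compact support contained in Ω, and assume u_0 ≠ 0. Assume sup_k ∫_Ω |∇u_k(x)|^p dx < ∞ and that for every ξ ∈ S^{n−1}, Ψ_ξ(u_0) ≤ liminf_{k→∞} Ψ_ξ(u_k). Then there exist a constant c_0 > 0 and an integer k_0 ≥ 1, both independent of ξ, such that Ψ_ξ(u_k) ≥ c_0 for all k ≥ k_0 and all ξ ∈ S^{n−1}. -/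
open MeasureTheory Metric Filter
open scoped ENNReal RealInnerProductSpace NNReal

noncomputable section

-- MVT inequality
lemma my_rpow_mvt {p : ℝ} (hp : 1 ≤ p) {a b R : ℝ} (hb : 0 ≤ b) (hba : b ≤ a) (haR : a ≤ R) :
    a ^ p - b ^ p ≤ p * R ^ (p - 1) * (a - b) := by
  rcases eq_or_lt_of_le hba with h | h
  · subst h; simp
  · obtain ⟨c, hc, hceq⟩ := exists_hasDerivAt_eq_slope (fun x : ℝ => x ^ p)
      (fun x : ℝ => p * x ^ (p - 1)) h
      (fun x _ => (Real.hasDerivAt_rpow_const (Or.inr hp)).continuousAt.continuousWithinAt)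
      (fun x _ => Real.hasDerivAt_rpow_const (Or.inr hp))
    have hab : a - b > 0 := by linarith
    have : a ^ p - b ^ p = p * c ^ (p - 1) * (a - b) := by
      field_simp at hceq; linarith [hceq]
    rw [this]
    have hc0 : 0 ≤ c := le_of_lt (lt_of_le_of_lt hb hc.1)
    have hcR : c ≤ R := le_trans (le_of_lt hc.2) haR
    have hrr := Real.rpow_le_rpow hc0 hcR (by linarith : 0 ≤ p - 1)
    have hp0 : (0:ℝ) ≤ p := by linarith
    exact mul_le_mul_of_nonneg_right (mul_le_mul_of_nonneg_left hrr hp0) (le_of_lt hab)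

lemma my_rpow_lip {p : ℝ} (hp : 1 ≤ p) {a b R : ℝ} (ha : 0 ≤ a) (hb : 0 ≤ b)
    (haR : a ≤ R) (hbR : b ≤ R) :
    |a ^ p - b ^ p| ≤ p * R ^ (p - 1) * |a - b| := by
  rcases le_total b a with h | h
  · rw [abs_of_nonneg (by linarith : 0 ≤ a - b),
      abs_of_nonneg (sub_nonneg.mpr (Real.rpow_le_rpow hb h (by linarith)))]
    exact my_rpow_mvt hp hb h haR
  · rw [abs_sub_comm, abs_sub_comm a b,
      abs_of_nonneg (by linarith : 0 ≤ b - a),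
      abs_of_nonneg (sub_nonneg.mpr (Real.rpow_le_rpow ha h (by linarith)))]
    exact my_rpow_mvt hp ha h hbR

-- pointwise estimate for a continuous linear map
lemma my_pointwise {n : ℕ} {p : ℝ} (hp : 1 ≤ p) (L : En n →L[ℝ] ℝ) {ξ η : En n}
    (hξ : ‖ξ‖ = 1) (hη : ‖η‖ = 1) :
    abs (|L ξ| ^ p - |L η| ^ p) ≤ p * ‖L‖ ^ p * ‖ξ - η‖ := by
  have haR : |L ξ| ≤ ‖L‖ := by
    calc |L ξ| = ‖L ξ‖ := rfl
    _ ≤ ‖L‖ * ‖ξ‖ := L.le_opNorm ξ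
    _ = ‖L‖ := by rw [hξ, mul_one]
  have hbR : |L η| ≤ ‖L‖ := by
    calc |L η| = ‖L η‖ := rfl
    _ ≤ ‖L‖ * ‖η‖ := L.le_opNorm η
    _ = ‖L‖ := by rw [hη, mul_one]
  rcases eq_or_lt_of_le (norm_nonneg L) with hL0 | hL0
  · have ha : |L ξ| = 0 := le_antisymm (by rw [← hL0] at haR; exact haR) (abs_nonneg _)
    have hb : |L η| = 0 := le_antisymm (by rw [← hL0] at hbR; exact hbR) (abs_nonneg _)
    rw [ha, hb, sub_self, abs_zero]
    positivity
  · have key := my_rpow_lip hp (abs_nonneg (L ξ)) (abs_nonneg (L η)) haR hbR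
    have hdiff : abs ((|L ξ|) - (|L η|)) ≤ ‖L‖ * ‖ξ - η‖ := by
      calc abs ((|L ξ|) - (|L η|)) ≤ |L ξ - L η| := abs_abs_sub_abs_le_abs_sub _ _
      _ = ‖L (ξ - η)‖ := by rw [map_sub]; rfl
      _ ≤ ‖L‖ * ‖ξ - η‖ := L.le_opNorm _
    calc abs (|L ξ| ^ p - |L η| ^ p) ≤ p * ‖L‖ ^ (p - 1) * abs ((|L ξ|) - (|L η|)) := key
    _ ≤ p * ‖L‖ ^ (p - 1) * (‖L‖ * ‖ξ - η‖) := by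
        apply mul_le_mul_of_nonneg_left hdiff
        have := Real.rpow_nonneg (le_of_lt hL0) (p - 1)
        positivity
    _ = p * ‖L‖ ^ p * ‖ξ - η‖ := by
        rw [show p = (p - 1) + 1 by ring, Real.rpow_add_one (ne_of_gt hL0)]
        ring_nf

lemma my_cont_integrand {n : ℕ} {p : ℝ} (hp : 1 ≤ p) {v : En n → ℝ} (hv : ContDiff ℝ 1 v)
    (ξ : En n) : Continuous (fun x => |fderiv ℝ v x ξ| ^ p) :=
  (((hv.continuous_fderiv one_ne_zero).clm_apply continuous_const).abs).rpow_const
    (fun _ => Or.inr (by linarith))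

lemma my_integrable {n : ℕ} {p : ℝ} (hp : 1 ≤ p) {v : En n → ℝ} (hv : ContDiff ℝ 1 v)
    (hcs : HasCompactSupport v) (ξ : En n) :
    Integrable (fun x => |fderiv ℝ v x ξ| ^ p) := by
  apply (my_cont_integrand hp hv ξ).integrable_of_hasCompactSupport
  exact (hcs.fderiv_apply ℝ ξ).comp_left (g := fun t : ℝ => |t| ^ p)
    (by simp [Real.zero_rpow (by linarith : p ≠ 0)])

lemma my_integrable_norm {n : ℕ} {p : ℝ} (hp : 1 ≤ p) {v : En n → ℝ} (hv : ContDiff ℝ 1 v)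
    (hcs : HasCompactSupport v) :
    Integrable (fun x => ‖fderiv ℝ v x‖ ^ p) := by
  apply Continuous.integrable_of_hasCompactSupport
  · exact ((hv.continuous_fderiv one_ne_zero).norm).rpow_const (fun _ => Or.inr (by linarith))
  · exact (hcs.fderiv ℝ).comp_left (g := fun L : En n →L[ℝ] ℝ => ‖L‖ ^ p)
      (by simp [Real.zero_rpow (by linarith : p ≠ 0)])

lemma my_psi_lip {n : ℕ} {p : ℝ} (hp : 1 ≤ p) {v : En n → ℝ} (hv : ContDiff ℝ 1 v)
    (hcs : HasCompactSupport v) (Ω : Set (En n)) {ξ η : En n} (hξ : ‖ξ‖ = 1) (hη : ‖η‖ = 1) :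
    |(∫ x in Ω, |fderiv ℝ v x ξ| ^ p) - ∫ x in Ω, |fderiv ℝ v x η| ^ p|
      ≤ p * (∫ x in Ω, ‖fderiv ℝ v x‖ ^ p) * ‖ξ - η‖ := by
  have hfi : IntegrableOn (fun x => |fderiv ℝ v x ξ| ^ p) Ω :=
    (my_integrable hp hv hcs ξ).integrableOn
  have hgi : IntegrableOn (fun x => |fderiv ℝ v x η| ^ p) Ω :=
    (my_integrable hp hv hcs η).integrableOn
  have hni : IntegrableOn (fun x => ‖fderiv ℝ v x‖ ^ p) Ω :=
    (my_integrable_norm hp hv hcs).integrableOn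
  calc |(∫ x in Ω, |fderiv ℝ v x ξ| ^ p) - ∫ x in Ω, |fderiv ℝ v x η| ^ p|
      = |∫ x in Ω, (|fderiv ℝ v x ξ| ^ p - |fderiv ℝ v x η| ^ p)| := by
        rw [integral_sub hfi hgi]
    _ ≤ ∫ x in Ω, |(|fderiv ℝ v x ξ| ^ p - |fderiv ℝ v x η| ^ p)| := by
        simpa [Real.norm_eq_abs] using
          norm_integral_le_integral_norm (μ := volume.restrict Ω)
            (fun x => |fderiv ℝ v x ξ| ^ p - |fderiv ℝ v x η| ^ p)
    _ ≤ ∫ x in Ω, (p * ‖ξ - η‖) * ‖fderiv ℝ v x‖ ^ p := by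
        apply integral_mono ((hfi.sub hgi).abs) (hni.const_mul _)
        intro x
        have := my_pointwise hp (fderiv ℝ v x) hξ hη
        calc |(|fderiv ℝ v x ξ| ^ p - |fderiv ℝ v x η| ^ p)|
            ≤ p * ‖fderiv ℝ v x‖ ^ p * ‖ξ - η‖ := this
          _ = (p * ‖ξ - η‖) * ‖fderiv ℝ v x‖ ^ p := by ring
    _ = (p * ‖ξ - η‖) * ∫ x in Ω, ‖fderiv ℝ v x‖ ^ p := integral_const_mul _ _
    _ = p * (∫ x in Ω, ‖fderiv ℝ v x‖ ^ p) * ‖ξ - η‖ := by ring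

lemma my_psi_pos {n : ℕ} {p : ℝ} (hp : 1 ≤ p) {Ω : Set (En n)} (hΩo : IsOpen Ω)
    {u₀ : En n → ℝ} (hu₀ : ContDiff ℝ 1 u₀) (hcs₀ : HasCompactSupport u₀)
    (hsupp₀ : tsupport u₀ ⊆ Ω) (hne : u₀ ≠ 0) {ξ : En n} (hξ : ‖ξ‖ = 1) :
    0 < ∫ x in Ω, |fderiv ℝ u₀ x ξ| ^ p := by
  have hgi : IntegrableOn (fun x => |fderiv ℝ u₀ x ξ| ^ p) Ω :=
    (my_integrable hp hu₀ hcs₀ ξ).integrableOn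
  rw [setIntegral_pos_iff_support_of_nonneg_ae
    (Filter.Eventually.of_forall fun x => Real.rpow_nonneg (abs_nonneg _) p) hgi]
  apply ((my_cont_integrand hp hu₀ ξ).isOpen_support.inter hΩo).measure_pos volume
  -- nonemptiness
  by_contra hemp
  rw [Set.not_nonempty_iff_eq_empty, Set.eq_empty_iff_forall_notMem] at hemp
  have hz : ∀ x, fderiv ℝ u₀ x ξ = 0 := by
    intro x
    by_cases hx : x ∈ Ω
    · have hns : x ∉ Function.support fun x => |fderiv ℝ u₀ x ξ| ^ p :=
        fun hs => hemp x ⟨hs, hx⟩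
      rw [Function.mem_support, not_not] at hns
      by_contra h
      have : (0:ℝ) < |fderiv ℝ u₀ x ξ| ^ p :=
        Real.rpow_pos_of_pos (abs_pos.mpr h) p
      rw [hns] at this; exact lt_irrefl _ this
    · have hxt : x ∉ tsupport u₀ := fun h => hx (hsupp₀ h)
      have hfd : fderiv ℝ u₀ x = 0 := by
        by_contra h
        exact hxt (support_fderiv_subset ℝ (by simpa [Function.mem_support] using h))
      simp [hfd]
  apply hne
  funext x
  obtain ⟨R, hR⟩ := ((hcs₀ : IsCompact (tsupport u₀)).isBounded).subset_ball (0 : En n)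
  set T : ℝ := R + ‖x‖ + 1 with hT
  have hline : ∀ t : ℝ, HasDerivAt (fun t : ℝ => u₀ (x + t • ξ)) 0 t := by
    intro t
    have h1 : HasDerivAt (fun t : ℝ => x + t • ξ) ξ t := by
      simpa using ((hasDerivAt_id t).smul_const ξ).const_add x
    have h2 := (hu₀.differentiable one_ne_zero (x + t • ξ)).hasFDerivAt
    have h3 := h2.comp_hasDerivAt t h1
    simpa [hz, Function.comp_def] using h3
  have hconst : u₀ (x + (0:ℝ) • ξ) = u₀ (x + T • ξ) :=
    is_const_of_deriv_eq_zero (fun t => (hline t).differentiableAt)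
      (fun t => (hline t).deriv) 0 T
  have hout : x + T • ξ ∉ tsupport u₀ := by
    intro hmem
    have hball := hR hmem
    rw [mem_ball, dist_zero_right] at hball
    have hRpos : 0 < R := lt_of_le_of_lt (norm_nonneg _) hball
    have hTpos : 0 < T := by rw [hT]; linarith [norm_nonneg x]
    have h4 : T - ‖x‖ ≤ ‖x + T • ξ‖ := by
      have h5 : ‖T • ξ‖ ≤ ‖x + T • ξ‖ + ‖x‖ := by
        calc ‖T • ξ‖ = ‖(x + T • ξ) - x‖ := by congr 1; abel
        _ ≤ ‖x + T • ξ‖ + ‖x‖ := norm_sub_le _ _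
      have h6 : ‖T • ξ‖ = T := by
        rw [norm_smul, hξ, mul_one, Real.norm_eq_abs, abs_of_pos hTpos]
      linarith
    linarith
  have hzero : u₀ (x + T • ξ) = 0 := image_eq_zero_of_notMem_tsupport hout
  have : u₀ x = 0 := by simpa [hzero] using hconst
  simpa using this

/-- Uniform lower bound along sequences: if `u₀ ≠ 0`, the gradients of `u_k` are
bounded in `L^p(Ω)` and `Ψ_ξ(u₀) ≤ liminf_k Ψ_ξ(u_k)` for every direction `ξ`, then
there are `c₀ > 0` and an integer `k₀ ≥ 1`, both independent of `ξ`, with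
`Ψ_ξ(u_k) ≥ c₀` for all `k ≥ k₀` and all `ξ ∈ S^{n-1}`. -/
theorem statement4 (n : ℕ) (hn : 2 ≤ n) (p : ℝ) (hp : 1 ≤ p) (hpn : p < n)
    (Ω : Set (En n)) (hΩo : IsOpen Ω) (hΩb : Bornology.IsBounded Ω)
    (u : ℕ → En n → ℝ) (u₀ : En n → ℝ)
    (hu : ∀ k, ContDiff ℝ 1 (u k)) (hcs : ∀ k, HasCompactSupport (u k))
    (hsupp : ∀ k, tsupport (u k) ⊆ Ω)
    (hu₀ : ContDiff ℝ 1 u₀) (hcs₀ : HasCompactSupport u₀) (hsupp₀ : tsupport u₀ ⊆ Ω)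
    (hne : u₀ ≠ 0)
    (C : ℝ) (hbd : ∀ k, (∫ x in Ω, ‖fderiv ℝ (u k) x‖ ^ p) ≤ C)
    (hlin : ∀ ξ : unitSphere n,
      Psi n p Ω u₀ ξ ≤ atTop.liminf (fun k => Psi n p Ω (u k) ξ)) :
    ∃ c₀ : ℝ, 0 < c₀ ∧ ∃ k₀ : ℕ, 1 ≤ k₀ ∧
      ∀ k, k₀ ≤ k → ∀ ξ : unitSphere n, c₀ ≤ Psi n p Ω (u k) ξ := by
  have hp0 : (0:ℝ) < p := by linarith
  have hC0 : (0:ℝ) ≤ C :=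
    le_trans (integral_nonneg fun x => Real.rpow_nonneg (norm_nonneg _) p) (hbd 0)
  haveI : Nonempty (Fin n) := ⟨⟨0, by omega⟩⟩
  haveI : Nontrivial (En n) := inferInstance
  set G : En n → ℝ := fun ζ => ∫ x in Ω, |fderiv ℝ u₀ x ζ| ^ p with hG
  set M₀ : ℝ := ∫ x in Ω, ‖fderiv ℝ u₀ x‖ ^ p with hM₀def
  have hM₀ : 0 ≤ M₀ := integral_nonneg fun x => Real.rpow_nonneg (norm_nonneg _) p
  -- continuity of G on the sphere via Lipschitz estimate
  have hlip : LipschitzOnWith (p * M₀).toNNReal G (sphere (0 : En n) 1) := by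
    rw [lipschitzOnWith_iff_dist_le_mul]
    intro ζ hζ η hη
    rw [Real.dist_eq, dist_eq_norm, Real.coe_toNNReal _ (by positivity)]
    exact my_psi_lip hp hu₀ hcs₀ Ω (mem_sphere_zero_iff_norm.mp hζ)
      (mem_sphere_zero_iff_norm.mp hη)
  obtain ⟨ξ₀, hξ₀s, hξ₀min⟩ := (isCompact_sphere (0:En n) 1).exists_isMinOn
    (NormedSpace.sphere_nonempty.mpr zero_le_one) hlip.continuousOn
  set m : ℝ := G ξ₀ with hmdef
  have hm : 0 < m := my_psi_pos hp hΩo hu₀ hcs₀ hsupp₀ hne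
    (mem_sphere_zero_iff_norm.mp hξ₀s)
  have hpC1 : (0:ℝ) < p * C + 1 := by nlinarith
  set δ : ℝ := m / (4 * (p * C + 1)) with hδdef
  have hδ : 0 < δ := div_pos hm (by linarith)
  obtain ⟨T, hT⟩ := (isCompact_sphere (0:En n) 1).elim_finite_subcover
    (fun ξ : unitSphere n => ball (ξ : En n) δ) (fun _ => isOpen_ball)
    (fun ζ hζ => Set.mem_iUnion.mpr ⟨⟨ζ, hζ⟩, mem_ball_self hδ⟩)
  have hev : ∀ᶠ k in atTop, ∀ i ∈ T, m / 2 < Psi n p Ω (u k) i := by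
    rw [Filter.eventually_all_finset]
    intro i hi
    apply Filter.eventually_lt_of_lt_liminf
    · calc m / 2 < m := by linarith
        _ ≤ G (i : En n) := isMinOn_iff.mp hξ₀min _ i.2
        _ ≤ atTop.liminf (fun k => Psi n p Ω (u k) i) := hlin i
    · exact Filter.isBoundedUnder_of
        ⟨0, fun k => integral_nonneg fun x => Real.rpow_nonneg (abs_nonneg _) p⟩
  obtain ⟨k₁, hk₁⟩ := Filter.eventually_atTop.mp hev
  refine ⟨m / 4, by linarith, max k₁ 1, le_max_right _ _, ?_⟩
  intro k hk ξ
  obtain ⟨i, hiT, hiball⟩ := Set.mem_iUnion₂.mp (hT ξ.2)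
  have hnear := my_psi_lip hp (hu k) (hcs k) Ω (mem_sphere_zero_iff_norm.mp ξ.2)
    (mem_sphere_zero_iff_norm.mp i.2)
  have hMk : (∫ x in Ω, ‖fderiv ℝ (u k) x‖ ^ p) ≤ C := hbd k
  have hMk0 : (0:ℝ) ≤ ∫ x in Ω, ‖fderiv ℝ (u k) x‖ ^ p :=
    integral_nonneg fun x => Real.rpow_nonneg (norm_nonneg _) p
  have hdist : ‖(ξ : En n) - i‖ < δ := by rwa [mem_ball, dist_eq_norm] at hiball
  have hbig : m / 2 < Psi n p Ω (u k) i := hk₁ k (le_trans (le_max_left _ _) hk) i hiT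
  have hest : |Psi n p Ω (u k) ξ - Psi n p Ω (u k) i| ≤ p * C * δ := by
    refine le_trans hnear ?_
    have h1 : p * (∫ x in Ω, ‖fderiv ℝ (u k) x‖ ^ p) * ‖(ξ : En n) - i‖
        ≤ p * C * ‖(ξ : En n) - i‖ := by
      apply mul_le_mul_of_nonneg_right _ (norm_nonneg _)
      exact mul_le_mul_of_nonneg_left hMk (le_of_lt hp0)
    refine le_trans h1 ?_
    exact mul_le_mul_of_nonneg_left (le_of_lt hdist) (by positivity)
  have hfinal : p * C * δ ≤ m / 4 := by
    have h2 : p * C * δ ≤ (p * C + 1) * δ := by nlinarith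
    have h3 : (p * C + 1) * δ = m / 4 := by
      rw [hδdef]; field_simp
    linarith
  have := (abs_le.mp hest).1
  linarith
end
end

section
/- (Superadditivity of the affine energy under truncation, Proposition 5.) Let 1 ≤ p < n, let Ω ⊆ ℝⁿ be a bounded open set, let u : ℝⁿ → ℝ be a C¹ function with compact support contained in Ω, and let h > 0. For ξ ∈ S^{n−1} set A_ξ = ∫_{Ω ∩ {|u| ≤ h}} |∇u(x)·ξ|^p dx and B_ξ = ∫_{Ω ∩ {|u| > h}} |∇u(x)·ξ|^p dx (these are the energies Ψ_ξ(T_h u) and Ψ_ξ(R_h u) of the truncations T_h u = min(max(u,−h),h) and R_h u = u − T_h u). Then α_{n,p}^p (∫_{S^{n−1}} (A_ξ + B_ξ)^{−n/p} dσ(ξ))^{−p/n} ≥ α_{n,p}^p (∫_{S^{n−1}} A_ξ^{−n/p} dσ(ξ))^{−p/n} + α_{n,p}^p (∫_{S^{n−1}} B_ξ^{−n/p} dσ(ξ))^{−p/n}; that is, E_{p,Ω}(u)^p ≥ E_{p,Ω}(T_h u)^p + E_{p,Ω}(R_h u)^p. -/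
open MeasureTheory Metric Filter
open scoped ENNReal RealInnerProductSpace NNReal

noncomputable section

/-- `F ↦ ((∫_{S^{n-1}} F(ξ)^{-n/p} dσ(ξ))^{-p/n}`, with the conventions
`0^{-n/p} = +∞` and `(+∞)^{-p/n} = 0` built into `ENNReal.rpow`. -/
def sphJ (n : ℕ) (p : ℝ) (F : unitSphere n → ℝ) : ℝ :=
  ((∫⁻ ξ, ENNReal.ofReal (F ξ) ^ (-((n : ℝ) / p)) ∂(sphereMeasure n)) ^
    (-(p / (n : ℝ)))).toReal

section AuxiliaryLemmas

open Set

lemma my_rpow_antitone {x y : ℝ≥0∞} {r : ℝ} (hr : r ≤ 0) (h : x ≤ y) : y ^ r ≤ x ^ r := by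
  rw [← neg_neg r, ENNReal.rpow_neg y, ENNReal.rpow_neg x]
  exact ENNReal.inv_le_inv.2 (ENNReal.rpow_le_rpow h (neg_nonneg.2 hr))

lemma my_convexOn_rpow_neg {q : ℝ} (hq : 0 < q) :
    ConvexOn ℝ (Set.Ioi (0:ℝ)) fun x : ℝ => x ^ (-q) := by
  have hderiv : ∀ x ∈ Set.Ioi (0:ℝ),
      HasDerivAt (fun x : ℝ => x ^ (-q)) (-q * x ^ (-q - 1)) x :=
    fun x hx => Real.hasDerivAt_rpow_const (Or.inl (ne_of_gt hx))
  have hd : Set.EqOn (deriv fun x : ℝ => x ^ (-q)) (fun x : ℝ => -q * x ^ (-q - 1))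
      (Set.Ioi 0) := fun x hx => (hderiv x hx).deriv
  have hd2 : ∀ x ∈ Set.Ioi (0:ℝ),
      HasDerivAt (fun x : ℝ => -q * x ^ (-q - 1)) (-q * ((-q - 1) * x ^ (-q - 1 - 1))) x :=
    fun x hx => (Real.hasDerivAt_rpow_const (Or.inl (ne_of_gt hx))).const_mul (-q)
  apply convexOn_of_deriv2_nonneg (convex_Ioi 0)
  · exact fun x hx => ((hderiv x hx).continuousAt).continuousWithinAt
  · rw [interior_Ioi]
    exact fun x hx => ((hderiv x hx).differentiableAt).differentiableWithinAt
  · rw [interior_Ioi]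
    intro x hx
    have := ((hd2 x hx).differentiableAt).congr_of_eventuallyEq
      (((isOpen_Ioi).eventually_mem hx).mono fun y hy => (hd hy))
    exact this.differentiableWithinAt
  · rw [interior_Ioi]
    intro x hx
    have h1 : deriv^[2] (fun x : ℝ => x ^ (-q)) x
        = deriv (fun y : ℝ => -q * y ^ (-q - 1)) x := by
      have : deriv (deriv fun x : ℝ => x ^ (-q)) x
          = deriv (fun y : ℝ => -q * y ^ (-q - 1)) x :=
        Filter.EventuallyEq.deriv_eq
          (((isOpen_Ioi).eventually_mem hx).mono fun y hy => hd hy)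
      simpa [Function.iterate_succ, Function.comp] using this
    rw [h1, (hd2 x hx).deriv]
    have hx0 : (0:ℝ) < x := hx
    have : 0 ≤ x ^ (-q - 1 - 1) := Real.rpow_nonneg hx0.le _
    have h2 : 0 ≤ q * (q + 1) * x ^ (-q - 1 - 1) := by positivity
    nlinarith [h2]

lemma my_key_real {q x y lam mu : ℝ} (hq : 0 < q) (hx : 0 < x) (hy : 0 < y)
    (hlam : 0 < lam) (hmu : 0 < mu) (hs : lam + mu = 1) :
    (x + y) ^ (-q) ≤ lam ^ (1 + q) * x ^ (-q) + mu ^ (1 + q) * y ^ (-q) := by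
  have hX : x / lam ∈ Set.Ioi (0:ℝ) := div_pos hx hlam
  have hY : y / mu ∈ Set.Ioi (0:ℝ) := div_pos hy hmu
  have hconv := (my_convexOn_rpow_neg hq).2 hX hY hlam.le hmu.le hs
  have hxy : lam • (x / lam) + mu • (y / mu) = x + y := by
    simp only [smul_eq_mul]; field_simp
  rw [hxy] at hconv
  refine hconv.trans (le_of_eq ?_)
  have h1 : (x / lam) ^ (-q) = x ^ (-q) / lam ^ (-q) :=
    Real.div_rpow hx.le hlam.le _
  have h2 : (y / mu) ^ (-q) = y ^ (-q) / mu ^ (-q) :=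
    Real.div_rpow hy.le hmu.le _
  have hlq : lam ^ (-q) ≠ 0 := ne_of_gt (Real.rpow_pos_of_pos hlam _)
  have hmq : mu ^ (-q) ≠ 0 := ne_of_gt (Real.rpow_pos_of_pos hmu _)
  have e1 : lam * (x / lam) ^ (-q) = lam ^ (1 + q) * x ^ (-q) := by
    rw [h1, Real.rpow_add hlam, Real.rpow_one]
    rw [div_eq_mul_inv, ← Real.rpow_neg hlam.le, neg_neg]
    ring
  have e2 : mu * (y / mu) ^ (-q) = mu ^ (1 + q) * y ^ (-q) := by
    rw [h2, Real.rpow_add hmu, Real.rpow_one]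
    rw [div_eq_mul_inv, ← Real.rpow_neg hmu.le, neg_neg]
    ring
  simp only [smul_eq_mul]
  rw [e1, e2]

lemma my_key_ennreal {q lam mu : ℝ} (hq : 0 < q) (hlam : 0 < lam) (hmu : 0 < mu)
    (hs : lam + mu = 1) (x y : ℝ≥0∞) (hx : x ≠ ⊤) (hy : y ≠ ⊤) :
    (x + y) ^ (-q) ≤ ENNReal.ofReal (lam ^ (1 + q)) * x ^ (-q)
      + ENNReal.ofReal (mu ^ (1 + q)) * y ^ (-q) := by
  rcases eq_or_ne x 0 with hx0 | hx0
  · have : x ^ (-q) = ⊤ := by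
      rw [hx0]; exact ENNReal.zero_rpow_of_neg (neg_neg_iff_pos.2 hq)
    rw [this, ENNReal.mul_top (by simp [ENNReal.ofReal_eq_zero, not_le,
      Real.rpow_pos_of_pos hlam (1+q)])]
    exact le_top.trans (le_add_right le_rfl)
  rcases eq_or_ne y 0 with hy0 | hy0
  · have : y ^ (-q) = ⊤ := by
      rw [hy0]; exact ENNReal.zero_rpow_of_neg (neg_neg_iff_pos.2 hq)
    rw [this, ENNReal.mul_top (by simp [ENNReal.ofReal_eq_zero, not_le,
      Real.rpow_pos_of_pos hmu (1+q)])]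
    exact le_top.trans (le_add_left le_rfl)
  · have hx' : 0 < x.toReal := ENNReal.toReal_pos hx0 hx
    have hy' : 0 < y.toReal := ENNReal.toReal_pos hy0 hy
    have hxe : x = ENNReal.ofReal x.toReal := (ENNReal.ofReal_toReal hx).symm
    have hye : y = ENNReal.ofReal y.toReal := (ENNReal.ofReal_toReal hy).symm
    rw [hxe, hye, ← ENNReal.ofReal_add hx'.le hy'.le,
      ENNReal.ofReal_rpow_of_pos (by positivity),
      ENNReal.ofReal_rpow_of_pos hx', ENNReal.ofReal_rpow_of_pos hy',
      ← ENNReal.ofReal_mul (Real.rpow_nonneg hlam.le _),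
      ← ENNReal.ofReal_mul (Real.rpow_nonneg hmu.le _),
      ← ENNReal.ofReal_add (by positivity) (by positivity)]
    exact ENNReal.ofReal_le_ofReal (my_key_real hq hx' hy' hlam hmu hs)

lemma my_superadd {α : Type*} [MeasurableSpace α] (ν : Measure α) {q r : ℝ}
    (hq : 0 < q) (hr : r < 0) (hqr : -q * r = 1)
    (f g : α → ℝ≥0∞) (hf : Measurable f) (hg : Measurable g)
    (hftop : ∀ x, f x ≠ ⊤) (hgtop : ∀ x, g x ≠ ⊤) :
    ((∫⁻ x, f x ^ (-q) ∂ν) ^ r).toReal + ((∫⁻ x, g x ^ (-q) ∂ν) ^ r).toReal ≤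
      ((∫⁻ x, (f x + g x) ^ (-q) ∂ν) ^ r).toReal := by
  have hmeasfq : Measurable fun x => f x ^ (-q) :=
    ENNReal.continuous_rpow_const.measurable.comp hf
  have hmeasgq : Measurable fun x => g x ^ (-q) :=
    ENNReal.continuous_rpow_const.measurable.comp hg
  have hmeasfgq : Measurable fun x => (f x + g x) ^ (-q) :=
    ENNReal.continuous_rpow_const.measurable.comp (hf.add hg)
  set I := ∫⁻ x, (f x + g x) ^ (-q) ∂ν with hIdef
  set IA := ∫⁻ x, f x ^ (-q) ∂ν with hIAdef
  set IB := ∫⁻ x, g x ^ (-q) ∂ν with hIBdef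
  by_cases hI : I = 0
  · -- then the measure is zero
    have hae := (lintegral_eq_zero_iff hmeasfgq).1 hI
    have hpt : ∀ x, (f x + g x) ^ (-q) ≠ 0 := by
      intro x hx0
      rcases ENNReal.rpow_eq_zero_iff.1 hx0 with ⟨_, h2⟩ | ⟨h1, _⟩
      · linarith
      · exact ENNReal.add_ne_top.2 ⟨hftop x, hgtop x⟩ h1
    have hν : ν = 0 := by
      have h0 : ν {x | ¬ ((f x + g x) ^ (-q) = 0)} = 0 := ae_iff.mp hae
      have huniv : {x | ¬ ((f x + g x) ^ (-q) = 0)} = Set.univ :=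
        Set.eq_univ_of_forall fun x => hpt x
      rw [huniv] at h0
      exact Measure.measure_univ_eq_zero.1 h0
    have hIA0 : IA = 0 := by rw [hIAdef, hν]; simp
    have hIB0 : IB = 0 := by rw [hIBdef, hν]; simp
    rw [hI, hIA0, hIB0, ENNReal.zero_rpow_of_neg hr]
    simp
  · have hIleA : I ≤ IA :=
      lintegral_mono fun x => my_rpow_antitone (by linarith) le_self_add
    have hIleB : I ≤ IB :=
      lintegral_mono fun x => my_rpow_antitone (by linarith) le_add_self
    set a := IA ^ r with hadef
    set b := IB ^ r with hbdef
    have hJtop : I ^ r ≠ ⊤ := by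
      intro htop
      rcases ENNReal.rpow_eq_top_iff.1 htop with ⟨h1, _⟩ | ⟨_, h2⟩
      · exact hI h1
      · linarith
    have hatop : a ≠ ⊤ := by
      intro htop
      rcases ENNReal.rpow_eq_top_iff.1 htop with ⟨h1, _⟩ | ⟨_, h2⟩
      · exact hI (le_antisymm (h1 ▸ hIleA) zero_le)
      · linarith
    have hbtop : b ≠ ⊤ := by
      intro htop
      rcases ENNReal.rpow_eq_top_iff.1 htop with ⟨h1, _⟩ | ⟨_, h2⟩
      · exact hI (le_antisymm (h1 ▸ hIleB) zero_le)
      · linarith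
    rcases eq_or_ne a 0 with ha0 | ha0
    · have hb : b ≤ I ^ r := my_rpow_antitone hr.le hIleB
      rw [ha0]
      simpa using ENNReal.toReal_mono hJtop hb
    rcases eq_or_ne b 0 with hb0 | hb0
    · have ha : a ≤ I ^ r := my_rpow_antitone hr.le hIleA
      rw [hb0]
      simpa using ENNReal.toReal_mono hJtop ha
    -- main case
    have ha' : 0 < a.toReal := ENNReal.toReal_pos ha0 hatop
    have hb' : 0 < b.toReal := ENNReal.toReal_pos hb0 hbtop
    set a' := a.toReal
    set b' := b.toReal
    set s := a' + b' with hsdef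
    have hspos : 0 < s := by positivity
    have hlam : 0 < a' / s := by positivity
    have hmu : 0 < b' / s := by positivity
    have hsum : a' / s + b' / s = 1 := by field_simp; exact hsdef.symm
    have step1 : I ≤ ENNReal.ofReal ((a'/s) ^ (1+q)) * IA
        + ENNReal.ofReal ((b'/s) ^ (1+q)) * IB := by
      calc I ≤ ∫⁻ x, (ENNReal.ofReal ((a'/s) ^ (1+q)) * f x ^ (-q)
            + ENNReal.ofReal ((b'/s) ^ (1+q)) * g x ^ (-q)) ∂ν :=
          lintegral_mono fun x =>
            my_key_ennreal hq hlam hmu hsum (f x) (g x) (hftop x) (hgtop x)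
        _ = ENNReal.ofReal ((a'/s) ^ (1+q)) * IA
            + ENNReal.ofReal ((b'/s) ^ (1+q)) * IB := by
          rw [lintegral_add_left (hmeasfq.const_mul _),
            lintegral_const_mul' _ _ ENNReal.ofReal_ne_top,
            lintegral_const_mul' _ _ ENNReal.ofReal_ne_top]
    have hIAa : IA = ENNReal.ofReal (a' ^ (-q)) := by
      have h1 : IA = (IA ^ r) ^ (-q) := by
        rw [← ENNReal.rpow_mul, mul_comm r (-q), hqr, ENNReal.rpow_one]
      rw [h1, ← hadef, ← ENNReal.ofReal_toReal hatop,
        ENNReal.ofReal_rpow_of_pos ha']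
    have hIBb : IB = ENNReal.ofReal (b' ^ (-q)) := by
      have h1 : IB = (IB ^ r) ^ (-q) := by
        rw [← ENNReal.rpow_mul, mul_comm r (-q), hqr, ENNReal.rpow_one]
      rw [h1, ← hbdef, ← ENNReal.ofReal_toReal hbtop,
        ENNReal.ofReal_rpow_of_pos hb']
    have hreal : (a'/s) ^ (1+q) * a' ^ (-q) + (b'/s) ^ (1+q) * b' ^ (-q)
        = s ^ (-q) := by
      have e1 : (a'/s) ^ (1+q) * a' ^ (-q) = a' / s ^ (1+q) := by
        rw [Real.div_rpow ha'.le hspos.le, div_mul_eq_mul_div,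
          ← Real.rpow_add ha']
        norm_num
      have e2 : (b'/s) ^ (1+q) * b' ^ (-q) = b' / s ^ (1+q) := by
        rw [Real.div_rpow hb'.le hspos.le, div_mul_eq_mul_div,
          ← Real.rpow_add hb']
        norm_num
      rw [e1, e2, ← add_div, ← hsdef,
        show (-q) = 1 - (1+q) by ring, Real.rpow_sub hspos, Real.rpow_one]
    have step2 : I ≤ ENNReal.ofReal s ^ (-q) := by
      rw [ENNReal.ofReal_rpow_of_pos hspos]
      calc I ≤ _ := step1
        _ = ENNReal.ofReal (s ^ (-q)) := by
          rw [hIAa, hIBb,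
            ← ENNReal.ofReal_mul (Real.rpow_nonneg (by positivity) _),
            ← ENNReal.ofReal_mul (Real.rpow_nonneg (by positivity) _),
            ← ENNReal.ofReal_add (by positivity) (by positivity), hreal]
    have step3 : ENNReal.ofReal s ≤ I ^ r := by
      have := my_rpow_antitone hr.le step2
      rwa [← ENNReal.rpow_mul, hqr, ENNReal.rpow_one] at this
    have := ENNReal.toReal_mono hJtop step3
    rwa [ENNReal.toReal_ofReal hspos.le] at this

end AuxiliaryLemmas

/-- Proposition 5 (superadditivity of the affine energy under truncation):
with `A_ξ = Ψ_ξ(T_h u)` and `B_ξ = Ψ_ξ(R_h u)` one has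
`E_{p,Ω}(u)^p ≥ E_{p,Ω}(T_h u)^p + E_{p,Ω}(R_h u)^p`. -/
theorem statement5 (n : ℕ) (hn : 2 ≤ n) (p : ℝ) (hp : 1 ≤ p) (hpn : p < n)
    (Ω : Set (En n)) (hΩo : IsOpen Ω) (hΩb : Bornology.IsBounded Ω)
    (e₁ : En n) (he₁ : ‖e₁‖ = 1)
    (u : En n → ℝ) (hu : ContDiff ℝ 1 u) (hcs : HasCompactSupport u)
    (hsupp : tsupport u ⊆ Ω) (h : ℝ) (hh : 0 < h) :
    alphanp n p e₁ ^ p *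
        sphJ n p (fun ξ =>
          (∫ x in Ω ∩ {x | |u x| ≤ h}, |fderiv ℝ u x (ξ : En n)| ^ p) +
            ∫ x in Ω ∩ {x | h < |u x|}, |fderiv ℝ u x (ξ : En n)| ^ p) ≥
      alphanp n p e₁ ^ p *
          sphJ n p (fun ξ => ∫ x in Ω ∩ {x | |u x| ≤ h}, |fderiv ℝ u x (ξ : En n)| ^ p) +
        alphanp n p e₁ ^ p *
          sphJ n p (fun ξ => ∫ x in Ω ∩ {x | h < |u x|}, |fderiv ℝ u x (ξ : En n)| ^ p) := by
  have hp0 : (0:ℝ) < p := lt_of_lt_of_le one_pos hp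
  have hn0 : (0:ℝ) < n := lt_trans hp0 hpn
  have halpha : 0 ≤ alphanp n p e₁ ^ p := by
    apply Real.rpow_nonneg
    apply mul_nonneg (Real.rpow_nonneg ?_ _) (Real.rpow_nonneg ?_ _)
    · exact mul_nonneg (Nat.cast_nonneg n) ENNReal.toReal_nonneg
    · exact integral_nonneg fun ξ => Real.rpow_nonneg (abs_nonneg _) _
  set S₁ := Ω ∩ {x | |u x| ≤ h} with hS₁
  set S₂ := Ω ∩ {x | h < |u x|} with hS₂
  set A : unitSphere n → ℝ := fun ξ => ∫ x in S₁, |fderiv ℝ u x (ξ : En n)| ^ p with hAdef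
  set B : unitSphere n → ℝ := fun ξ => ∫ x in S₂, |fderiv ℝ u x (ξ : En n)| ^ p with hBdef
  have hA : ∀ ξ, 0 ≤ A ξ :=
    fun ξ => integral_nonneg fun x => Real.rpow_nonneg (abs_nonneg _) _
  have hB : ∀ ξ, 0 ≤ B ξ :=
    fun ξ => integral_nonneg fun x => Real.rpow_nonneg (abs_nonneg _) _
  have hcont : Continuous fun z : unitSphere n × En n => |fderiv ℝ u z.2 (z.1 : En n)| ^ p := by
    have hfd : Continuous (fderiv ℝ u) := hu.continuous_fderiv one_ne_zero
    have h1 : Continuous fun z : unitSphere n × En n => fderiv ℝ u z.2 (z.1 : En n) :=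
      isBoundedBilinearMap_apply.continuous.comp
        ((hfd.comp continuous_snd).prodMk (continuous_subtype_val.comp continuous_fst))
    exact (h1.abs).rpow_const fun z => Or.inr hp0.le
  have hmeasA : Measurable A :=
    (hcont.stronglyMeasurable.integral_prod_right').measurable
  have hmeasB : Measurable B :=
    (hcont.stronglyMeasurable.integral_prod_right').measurable
  rw [ge_iff_le, ← mul_add]
  apply mul_le_mul_of_nonneg_left ?_ halpha
  simp only [sphJ]
  have hq : 0 < (n:ℝ)/p := by positivity
  have hr : -(p/(n:ℝ)) < 0 := by
    have : 0 < p/(n:ℝ) := by positivity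
    linarith
  have hqr : -((n:ℝ)/p) * -(p/(n:ℝ)) = 1 := by field_simp
  have hcong : (∫⁻ ξ, ENNReal.ofReal (A ξ + B ξ) ^ (-((n:ℝ)/p)) ∂(sphereMeasure n))
      = ∫⁻ ξ, (ENNReal.ofReal (A ξ) + ENNReal.ofReal (B ξ)) ^ (-((n:ℝ)/p))
          ∂(sphereMeasure n) :=
    lintegral_congr fun ξ => by rw [ENNReal.ofReal_add (hA ξ) (hB ξ)]
  rw [hcong]
  exact my_superadd (sphereMeasure n) hq hr hqr
    (fun ξ => ENNReal.ofReal (A ξ)) (fun ξ => ENNReal.ofReal (B ξ))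
    (ENNReal.measurable_ofReal.comp hmeasA) (ENNReal.measurable_ofReal.comp hmeasB)
    (fun _ => ENNReal.ofReal_ne_top) (fun _ => ENNReal.ofReal_ne_top)
end
end

section
/- (Comparison with the Dirichlet energy.) Let 1 ≤ p < n, let Ω ⊆ ℝⁿ be a bounded open set, and let u : ℝⁿ → ℝ be a C¹ function with compact support contained in Ω. Then E_{p,Ω}(u) ≤ (∫_Ω |∇u(x)|^p dx)^{1/p}. -/
open MeasureTheory Metric Filter
open scoped ENNReal RealInnerProductSpace NNReal

noncomputable section

/-! ### Auxiliary lemmas -/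

open Set Function
open scoped Pointwise

section Aux

/-- The map on the unit sphere induced by a linear isometry. -/
def sphereMap (n : ℕ) (R : En n ≃ₗᵢ[ℝ] En n) (ξ : unitSphere n) : unitSphere n :=
  ⟨R ξ, by
    have := ξ.2
    rw [mem_sphere_zero_iff_norm] at this ⊢
    rw [R.norm_map]; exact this⟩

lemma sphereMap_continuous (n : ℕ) (R : En n ≃ₗᵢ[ℝ] En n) : Continuous (sphereMap n R) :=
  Continuous.subtype_mk (R.continuous.comp continuous_subtype_val) _

/-- The sphere measure is invariant under linear isometries. -/
lemma map_sphereMap (n : ℕ) (R : En n ≃ₗᵢ[ℝ] En n) :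
    Measure.map (sphereMap n R) (sphereMeasure n) = sphereMeasure n := by
  refine Measure.ext fun s hs => ?_
  rw [Measure.map_apply (sphereMap_continuous n R).measurable hs]
  rw [sphereMeasure, Measure.toSphere_apply' _ ((sphereMap_continuous n R).measurable hs),
    Measure.toSphere_apply' _ hs]
  congr 1
  have himg : (Subtype.val '' (sphereMap n R ⁻¹' s)) = ⇑R.symm '' (Subtype.val '' s) := by
    ext x
    constructor
    · rintro ⟨ξ, hξ, rfl⟩
      exact ⟨(sphereMap n R ξ : En n), ⟨sphereMap n R ξ, hξ, rfl⟩, by simp [sphereMap]⟩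
    · rintro ⟨y, ⟨η, hη, rfl⟩, rfl⟩
      refine ⟨sphereMap n R.symm η, ?_, rfl⟩
      show sphereMap n R (sphereMap n R.symm η) ∈ s
      have : sphereMap n R (sphereMap n R.symm η) = η := by
        apply Subtype.ext; simp [sphereMap]
      rwa [this]
  rw [himg]
  have hsm : (Ioo (0:ℝ) 1) • (⇑R.symm '' (Subtype.val '' s))
      = ⇑R.symm '' ((Ioo (0:ℝ) 1) • (Subtype.val '' s)) := by
    ext x
    constructor
    · rintro ⟨r, hr, y, ⟨a, ha, rfl⟩, rfl⟩
      exact ⟨r • a, ⟨r, hr, a, ha, rfl⟩, by simp⟩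
    · rintro ⟨y, ⟨r, hr, a, ha, rfl⟩, rfl⟩
      exact ⟨r, hr, R.symm a, ⟨a, ha, rfl⟩, by simp⟩
  rw [hsm]
  have hpre : ⇑R.symm '' ((Ioo (0:ℝ) 1) • (Subtype.val '' s))
      = ⇑R ⁻¹' ((Ioo (0:ℝ) 1) • (Subtype.val '' s)) := by
    ext z
    constructor
    · rintro ⟨b, hb, rfl⟩; simpa using hb
    · intro h; exact ⟨R z, h, by simp⟩
  rw [hpre]
  exact R.measurePreserving.measure_preimage_emb
    (R.toHomeomorph.measurableEmbedding) _

lemma integral_sphereMap (n : ℕ) (R : En n ≃ₗᵢ[ℝ] En n) (f : unitSphere n → ℝ)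
    (hf : Continuous f) :
    ∫ ξ, f (sphereMap n R ξ) ∂(sphereMeasure n) = ∫ ξ, f ξ ∂(sphereMeasure n) := by
  conv_rhs => rw [← map_sphereMap n R]
  rw [integral_map (sphereMap_continuous n R).aemeasurable hf.aestronglyMeasurable]

lemma cont_inner_rpow (n : ℕ) (p : ℝ) (hp : 0 ≤ p) (v : En n) :
    Continuous fun ξ : unitSphere n => |⟪v, (ξ : En n)⟫| ^ p := by
  apply Continuous.rpow_const
  · have h : Continuous fun ξ : unitSphere n => ⟪v, (ξ : En n)⟫ :=
      Continuous.inner continuous_const continuous_subtype_val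
    exact h.abs
  · intro ξ; right; exact hp

/-- Rotation invariance: the spherical integral of `|⟨v,ξ⟩|^p` only depends on `‖v‖`. -/
lemma integral_rotate (n : ℕ) (p : ℝ) (hp : 0 < p) (e₁ : En n) (he₁ : ‖e₁‖ = 1) (v : En n) :
    ∫ ξ, |⟪v, (ξ : En n)⟫| ^ p ∂(sphereMeasure n)
      = ‖v‖ ^ p * ∫ ξ, |⟪e₁, (ξ : En n)⟫| ^ p ∂(sphereMeasure n) := by
  by_cases hv : v = 0
  · simp [hv, Real.zero_rpow hp.ne', abs_of_nonneg]
  · set w : En n := ‖v‖⁻¹ • v with hw_def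
    have hnv : ‖v‖ ≠ 0 := norm_ne_zero_iff.2 hv
    have hw : ‖w‖ = 1 := norm_smul_inv_norm hv
    set R : En n ≃ₗᵢ[ℝ] En n := (Submodule.reflection (ℝ ∙ (e₁ - w))ᗮ)
    have hR : R e₁ = w := Submodule.reflection_sub (by rw [he₁, hw])
    have key : ∀ ξ : unitSphere n, |⟪v, (ξ : En n)⟫| ^ p
        = ‖v‖ ^ p * |⟪e₁, ((sphereMap n R.symm ξ : unitSphere n) : En n)⟫| ^ p := by
      intro ξ
      have h1 : ⟪v, (ξ : En n)⟫ = ‖v‖ * ⟪w, (ξ : En n)⟫ := by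
        rw [hw_def, real_inner_smul_left]; field_simp
      have h2 : ⟪w, (ξ : En n)⟫ = ⟪e₁, R.symm (ξ : En n)⟫ := by
        rw [← hR]
        calc ⟪R e₁, (ξ : En n)⟫ = ⟪R e₁, R (R.symm (ξ : En n))⟫ := by
              rw [R.apply_symm_apply]
          _ = ⟪e₁, R.symm (ξ : En n)⟫ := R.inner_map_map _ _
      have h3 : ((sphereMap n R.symm ξ : unitSphere n) : En n) = R.symm (ξ : En n) := rfl
      rw [h1, h2, abs_mul, abs_of_nonneg (norm_nonneg v),
        Real.mul_rpow (norm_nonneg v) (abs_nonneg _), h3]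
    simp_rw [key]
    rw [integral_const_mul, integral_sphereMap n R.symm _ (cont_inner_rpow n p hp.le e₁)]

lemma sphereMeasure_univ (n : ℕ) : sphereMeasure n Set.univ
    = (n : ℝ≥0∞) * volume (Metric.ball (0 : En n) 1) := by
  rw [sphereMeasure, Measure.toSphere_apply_univ, finrank_euclideanSpace_fin]

instance (n : ℕ) : IsFiniteMeasure (sphereMeasure n) := by
  unfold sphereMeasure; infer_instance

lemma sphereMeasure_univ_toReal_pos (n : ℕ) (hn : 2 ≤ n) :
    0 < (sphereMeasure n Set.univ).toReal := by
  haveI : Nonempty (Fin n) := ⟨⟨0, by omega⟩⟩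
  rw [sphereMeasure_univ]
  have hb : (0:ℝ≥0∞) < volume (Metric.ball (0 : En n) 1) :=
    measure_ball_pos _ _ one_pos
  have hbt : volume (Metric.ball (0 : En n) 1) ≠ ⊤ := measure_ball_lt_top.ne
  rw [ENNReal.toReal_pos_iff]
  constructor
  · exact ENNReal.mul_pos (by simpa using (by omega : n ≠ 0)) hb.ne'
  · exact ENNReal.mul_lt_top (ENNReal.natCast_lt_top n) hbt.lt_top

lemma norm_coe_sphere {n : ℕ} (ξ : unitSphere n) : ‖(ξ : En n)‖ = 1 := by
  have := ξ.2; rwa [mem_sphere_zero_iff_norm] at this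

lemma integrable_inner_rpow (n : ℕ) (p : ℝ) (hp : 0 ≤ p) (v : En n) :
    Integrable (fun ξ : unitSphere n => |⟪v, (ξ : En n)⟫| ^ p) (sphereMeasure n) := by
  refine (integrable_const ((‖v‖ + 1) ^ p)).mono'
    (cont_inner_rpow n p hp v).aestronglyMeasurable (ae_of_all _ fun ξ => ?_)
  have h1 : |⟪v, (ξ : En n)⟫| ≤ ‖v‖ + 1 := by
    refine le_trans (abs_real_inner_le_norm _ _) ?_
    rw [norm_coe_sphere, mul_one]; linarith
  rw [Real.norm_eq_abs, abs_of_nonneg (Real.rpow_nonneg (abs_nonneg _) _)]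
  exact Real.rpow_le_rpow (abs_nonneg _) h1 hp

/-- Positivity of the normalizing spherical integral. -/
lemma cp_pos (n : ℕ) (hn : 2 ≤ n) (p : ℝ) (hp : 1 ≤ p) (e₁ : En n) (he₁ : ‖e₁‖ = 1) :
    0 < ∫ ξ, |⟪e₁, (ξ : En n)⟫| ^ p ∂(sphereMeasure n) := by
  haveI : Nonempty (Fin n) := ⟨⟨0, by omega⟩⟩
  have hp0 : (0:ℝ) < p := lt_of_lt_of_le one_pos hp
  set κ : ℝ := ((Real.sqrt n)⁻¹) ^ p with hκ
  have hsq : (0:ℝ) < Real.sqrt n := Real.sqrt_pos.2 (by positivity)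
  have hκpos : 0 < κ := Real.rpow_pos_of_pos (by positivity) _
  have hpt : ∀ ξ : unitSphere n, κ ≤ ∑ i : Fin n,
      |⟪EuclideanSpace.single i (1:ℝ), (ξ : En n)⟫| ^ p := by
    intro ξ
    have hξ : ‖(ξ : En n)‖ = 1 := norm_coe_sphere ξ
    have hsum : ∑ i, |(ξ : En n) i| ^ 2 = 1 := by
      have h := EuclideanSpace.norm_eq (ξ : En n)
      rw [hξ] at h
      have h2 := Real.sqrt_eq_one.1 h.symm
      simpa [Real.norm_eq_abs] using h2
    have hex : ∃ i : Fin n, (Real.sqrt n)⁻¹ ≤ |(ξ : En n) i| := by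
      by_contra hcon
      push_neg at hcon
      have hlt : ∑ i, |(ξ : En n) i| ^ 2 < ∑ _i : Fin n, ((n:ℝ))⁻¹ := by
        refine Finset.sum_lt_sum_of_nonempty (by simp [Finset.univ_nonempty]) fun i _ => ?_
        have h1 : |(ξ : En n) i| < (Real.sqrt n)⁻¹ := hcon i
        have h2 : |(ξ : En n) i| ^ 2 < ((Real.sqrt n)⁻¹) ^ 2 :=
          pow_lt_pow_left₀ h1 (abs_nonneg _) (by norm_num)
        rwa [← Real.sqrt_inv, Real.sq_sqrt (by positivity)] at h2
      rw [hsum] at hlt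
      simp only [Finset.sum_const, Finset.card_univ, Fintype.card_fin, nsmul_eq_mul] at hlt
      rw [mul_inv_cancel₀ (by positivity : (n:ℝ) ≠ 0)] at hlt
      exact lt_irrefl 1 hlt
    obtain ⟨i, hi⟩ := hex
    calc κ ≤ |(ξ : En n) i| ^ p := Real.rpow_le_rpow (by positivity) hi hp0.le
      _ = |⟪EuclideanSpace.single i (1:ℝ), (ξ : En n)⟫| ^ p := by
          rw [EuclideanSpace.inner_single_left]
          norm_num
      _ ≤ ∑ j, |⟪EuclideanSpace.single j (1:ℝ), (ξ : En n)⟫| ^ p :=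
          Finset.single_le_sum
            (f := fun j : Fin n => |⟪EuclideanSpace.single j (1:ℝ), (ξ : En n)⟫| ^ p)
            (fun j _ => Real.rpow_nonneg (abs_nonneg _) _) (Finset.mem_univ i)
  have hint : ∀ i : Fin n, ∫ ξ, |⟪EuclideanSpace.single i (1:ℝ), (ξ : En n)⟫| ^ p
        ∂(sphereMeasure n)
      = ∫ ξ, |⟪e₁, (ξ : En n)⟫| ^ p ∂(sphereMeasure n) := by
    intro i
    rw [integral_rotate n p hp0 e₁ he₁, EuclideanSpace.norm_single, norm_one, Real.one_rpow,
      one_mul]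
  have hIsum : ∫ ξ, (∑ i : Fin n, |⟪EuclideanSpace.single i (1:ℝ), (ξ : En n)⟫| ^ p)
        ∂(sphereMeasure n)
      = (n : ℝ) * ∫ ξ, |⟪e₁, (ξ : En n)⟫| ^ p ∂(sphereMeasure n) := by
    rw [integral_finset_sum _ fun i _ => integrable_inner_rpow n p hp0.le _]
    rw [Finset.sum_congr rfl fun i _ => hint i]
    simp [Finset.sum_const]
  have hline : κ * ((sphereMeasure n) Set.univ).toReal
      ≤ (n:ℝ) * ∫ ξ, |⟪e₁, (ξ : En n)⟫| ^ p ∂(sphereMeasure n) := by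
    rw [← hIsum]
    have := integral_mono (integrable_const κ)
      (integrable_finset_sum _ fun i _ => integrable_inner_rpow n p hp0.le _) hpt
    simpa [mul_comm, measureReal_def] using this
  have hσ : 0 < ((sphereMeasure n) Set.univ).toReal := sphereMeasure_univ_toReal_pos n hn
  nlinarith [mul_pos hκpos hσ]

variable {n : ℕ} {p : ℝ} {Ω : Set (En n)} {u : En n → ℝ}

section main
variable (hp : 1 ≤ p) (hΩo : IsOpen Ω) (hΩb : Bornology.IsBounded Ω)
  (hu : ContDiff ℝ 1 u) (hcs : HasCompactSupport u) (hsupp : tsupport u ⊆ Ω)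

include hp hu in
lemma cont_h : Continuous fun q : unitSphere n × En n => |fderiv ℝ u q.2 (q.1 : En n)| ^ p := by
  have hD : Continuous (fderiv ℝ u) := hu.continuous_fderiv one_ne_zero
  have h1 : Continuous fun q : unitSphere n × En n => fderiv ℝ u q.2 (q.1 : En n) :=
    (hD.comp continuous_snd).clm_apply (continuous_subtype_val.comp continuous_fst)
  exact h1.abs.rpow_const fun q => Or.inr (by linarith)

include hu hcs in
lemma exists_bound : ∃ C : ℝ, 0 ≤ C ∧ ∀ x, ‖fderiv ℝ u x‖ ≤ C := by
  obtain ⟨C, hC⟩ := (hu.continuous_fderiv one_ne_zero).bounded_above_of_compact_support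
    (hcs.fderiv (𝕜 := ℝ))
  exact ⟨C, le_trans (norm_nonneg _) (hC 0), fun x => by simpa using hC x⟩

include hp in
lemma h_bound {C : ℝ} (hC : ∀ x, ‖fderiv ℝ u x‖ ≤ C) (ξ : unitSphere n)
    (x : En n) : ‖|fderiv ℝ u x (ξ : En n)| ^ p‖ ≤ C ^ p := by
  rw [Real.norm_eq_abs, abs_of_nonneg (Real.rpow_nonneg (abs_nonneg _) _)]
  refine Real.rpow_le_rpow (abs_nonneg _) ?_ (by linarith)
  calc |fderiv ℝ u x (ξ : En n)| ≤ ‖fderiv ℝ u x‖ * ‖(ξ : En n)‖ :=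
        (fderiv ℝ u x).le_opNorm _
    _ = ‖fderiv ℝ u x‖ := by rw [norm_coe_sphere, mul_one]
    _ ≤ C := hC x

include hp hΩb hu hcs in
lemma fubini_step (e₁ : En n) (he₁ : ‖e₁‖ = 1) :
    ∫ ξ, Psi n p Ω u ξ ∂(sphereMeasure n)
      = (∫ ξ, |⟪e₁, (ξ : En n)⟫| ^ p ∂(sphereMeasure n)) * ∫ x in Ω, ‖fderiv ℝ u x‖ ^ p := by
  haveI : IsFiniteMeasure ((volume : Measure (En n)).restrict Ω) :=
    ⟨by rw [Measure.restrict_apply_univ]; exact hΩb.measure_lt_top⟩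
  have hp0 : (0:ℝ) < p := lt_of_lt_of_le one_pos hp
  obtain ⟨C, hC0, hC⟩ := exists_bound hu hcs
  have hcont := cont_h hp hu (p := p)
  have hint : Integrable (uncurry fun (ξ : unitSphere n) (x : En n) =>
      |fderiv ℝ u x (ξ : En n)| ^ p)
      ((sphereMeasure n).prod ((volume : Measure (En n)).restrict Ω)) := by
    refine (integrable_const (C ^ p)).mono' hcont.aestronglyMeasurable
      (ae_of_all _ fun q => h_bound hp hC q.1 q.2)
  have hswap := integral_integral_swap hint
  calc ∫ ξ, Psi n p Ω u ξ ∂(sphereMeasure n)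
      = ∫ x in Ω, ∫ ξ, |fderiv ℝ u x (ξ : En n)| ^ p ∂(sphereMeasure n) := hswap
    _ = ∫ x in Ω, ‖fderiv ℝ u x‖ ^ p * ∫ ξ, |⟪e₁, (ξ : En n)⟫| ^ p ∂(sphereMeasure n) := by
        refine integral_congr_ae (ae_of_all _ fun x => ?_)
        show ∫ ξ, |fderiv ℝ u x (ξ : En n)| ^ p ∂(sphereMeasure n)
          = ‖fderiv ℝ u x‖ ^ p * ∫ ξ, |⟪e₁, (ξ : En n)⟫| ^ p ∂(sphereMeasure n)
        set v : En n := (InnerProductSpace.toDual ℝ (En n)).symm (fderiv ℝ u x) with hv_def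
        have hv : ∀ ξ : unitSphere n, fderiv ℝ u x (ξ : En n) = ⟪v, (ξ : En n)⟫ :=
          fun ξ => (InnerProductSpace.toDual_symm_apply).symm
        have hx : ∫ ξ, |fderiv ℝ u x (ξ : En n)| ^ p ∂(sphereMeasure n)
            = ∫ ξ, |⟪v, (ξ : En n)⟫| ^ p ∂(sphereMeasure n) :=
          integral_congr_ae (ae_of_all _ fun ξ => by
            show |fderiv ℝ u x (ξ : En n)| ^ p = |⟪v, (ξ : En n)⟫| ^ p
            rw [hv ξ])
        rw [hx, integral_rotate n p hp0 e₁ he₁]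
        have hnv : ‖v‖ = ‖fderiv ℝ u x‖ := by rw [hv_def, LinearIsometryEquiv.norm_map]
        rw [hnv]
    _ = (∫ ξ, |⟪e₁, (ξ : En n)⟫| ^ p ∂(sphereMeasure n)) * ∫ x in Ω, ‖fderiv ℝ u x‖ ^ p := by
        rw [integral_mul_const]
        exact mul_comm _ _

include hp hΩo hΩb hu hcs hsupp in
lemma vanish (ξ0 : unitSphere n) (h0 : Psi n p Ω u ξ0 = 0) : ∀ x, u x = 0 := by
  haveI : IsFiniteMeasure ((volume : Measure (En n)).restrict Ω) :=
    ⟨by rw [Measure.restrict_apply_univ]; exact hΩb.measure_lt_top⟩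
  have hp0 : (0:ℝ) < p := lt_of_lt_of_le one_pos hp
  set g : En n → ℝ := fun x => |fderiv ℝ u x (ξ0 : En n)| ^ p with hg_def
  have hgc : Continuous g := by
    have hD : Continuous (fderiv ℝ u) := hu.continuous_fderiv one_ne_zero
    exact ((hD.clm_apply continuous_const).abs).rpow_const fun x => Or.inr (by linarith)
  have hgnn : ∀ x, 0 ≤ g x := fun x => Real.rpow_nonneg (abs_nonneg _) _
  obtain ⟨C, hC⟩ := (hu.continuous_fderiv one_ne_zero).bounded_above_of_compact_support
    (hcs.fderiv (𝕜 := ℝ))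
  have hgint : Integrable g ((volume : Measure (En n)).restrict Ω) := by
    refine (integrable_const (C ^ p)).mono' hgc.aestronglyMeasurable (ae_of_all _ fun x => ?_)
    rw [Real.norm_eq_abs, abs_of_nonneg (hgnn x)]
    refine Real.rpow_le_rpow (abs_nonneg _) ?_ hp0.le
    calc |fderiv ℝ u x (ξ0 : En n)| ≤ ‖fderiv ℝ u x‖ * ‖(ξ0 : En n)‖ :=
          (fderiv ℝ u x).le_opNorm _
      _ = ‖fderiv ℝ u x‖ := by rw [norm_coe_sphere, mul_one]
      _ ≤ C := by simpa using hC x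
  have hae : g =ᵐ[(volume : Measure (En n)).restrict Ω] 0 :=
    (integral_eq_zero_iff_of_nonneg_ae (ae_of_all _ hgnn) hgint).1 h0
  have hgΩ : ∀ x ∈ Ω, g x = 0 := by
    by_contra hcon
    push_neg at hcon
    obtain ⟨x₀, hx₀Ω, hx₀⟩ := hcon
    have hx₀pos : 0 < g x₀ := lt_of_le_of_ne (hgnn x₀) (Ne.symm hx₀)
    set U : Set (En n) := Ω ∩ g ⁻¹' Set.Ioi (g x₀ / 2) with hU
    have hUopen : IsOpen U := hΩo.inter (isOpen_Ioi.preimage hgc)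
    have hx₀U : x₀ ∈ U := ⟨hx₀Ω, by simp; linarith⟩
    have hUpos : 0 < volume U := hUopen.measure_pos _ ⟨x₀, hx₀U⟩
    have hnull : volume {x | ¬(x ∈ Ω → g x = 0)} = 0 := by
      have := (ae_restrict_iff' hΩo.measurableSet).1 hae
      simpa [ae_iff] using this
    have hsub : U ⊆ {x | ¬(x ∈ Ω → g x = 0)} := by
      rintro x ⟨hxΩ, hxg⟩
      simp only [Set.mem_setOf_eq, Classical.not_imp]
      refine ⟨hxΩ, ?_⟩
      have hgx : g x₀ / 2 < g x := hxg
      have h0' : 0 < g x := lt_trans (by linarith) hgx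
      exact h0'.ne'
    exact absurd (measure_mono_null hsub hnull) hUpos.ne'
  have hd : ∀ x, fderiv ℝ u x (ξ0 : En n) = 0 := by
    intro x
    by_cases hx : x ∈ Ω
    · have := hgΩ x hx
      rw [hg_def] at this
      have habs : |fderiv ℝ u x (ξ0 : En n)| = 0 := by
        by_contra habs
        have h1 : (0:ℝ) < |fderiv ℝ u x (ξ0 : En n)| :=
          lt_of_le_of_ne (abs_nonneg _) (Ne.symm habs)
        have := Real.rpow_pos_of_pos h1 p
        simp only [hg_def] at hgΩ
        linarith [hgΩ x hx]
      simpa using habs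
    · have hxn : x ∉ tsupport u := fun h => hx (hsupp h)
      have hfz : fderiv ℝ u x = 0 := by
        have hsub := support_fderiv_subset ℝ (f := u)
        by_contra hne
        exact hxn (hsub (by simpa [Function.mem_support] using hne))
      rw [hfz]; rfl
  intro x
  set c : En n := (ξ0 : En n)
  set φ : ℝ → ℝ := fun t => u (x + t • c) with hφ
  have hline : ∀ t : ℝ, HasDerivAt (fun s : ℝ => x + s • c) c t := fun t => by
    simpa using ((hasDerivAt_id t).smul_const c).const_add x
  have hφd : ∀ t, HasDerivAt φ 0 t := by
    intro t
    have h1 := ((hu.differentiable one_ne_zero) (x + t • c)).hasFDerivAt.comp_hasDerivAt t (hline t)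
    rw [hd (x + t • c)] at h1; exact h1
  have hconst : ∀ t : ℝ, φ t = φ 0 := by
    intro t
    exact is_const_of_deriv_eq_zero (fun s => (hφd s).differentiableAt)
      (fun s => (hφd s).deriv) t 0
  obtain ⟨R, hR⟩ := hcs.isBounded.subset_ball 0
  set T : ℝ := ‖x‖ + |R| + 1 with hT
  have hout : x + T • c ∉ tsupport u := by
    intro hmem
    have h1 : ‖x + T • c‖ < |R| := lt_of_lt_of_le (by
      simpa [abs_of_nonneg, mem_ball, dist_zero_right] using
        (hR hmem : x + T • c ∈ ball 0 R) |>.trans_le (le_abs_self R)) le_rfl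
    have h2 : ‖T • c‖ ≤ ‖x + T • c‖ + ‖x‖ := by
      have := norm_sub_le (x + T • c) x
      simpa using this
    rw [norm_smul, norm_coe_sphere, mul_one, Real.norm_eq_abs] at h2
    have hTnn : 0 ≤ T := by positivity
    rw [abs_of_nonneg hTnn] at h2
    have : ‖x‖ + |R| + 1 ≤ ‖x + T • c‖ + ‖x‖ := h2
    linarith
  have hu0 : u (x + T • c) = 0 := image_eq_zero_of_notMem_tsupport hout
  have hfin := hconst T
  rw [hφ] at hfin
  simp only at hfin
  rw [hu0] at hfin
  simpa using hfin.symm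

include hp hΩb hu hcs in
lemma psi_continuous : Continuous (Psi n p Ω u) := by
  haveI : IsFiniteMeasure ((volume : Measure (En n)).restrict Ω) :=
    ⟨by rw [Measure.restrict_apply_univ]; exact hΩb.measure_lt_top⟩
  obtain ⟨C, hC0, hC⟩ := exists_bound hu hcs
  refine continuous_of_dominated (bound := fun _ => C ^ p) (fun ξ => ?_)
    (fun ξ => ae_of_all _ fun x => h_bound hp hC ξ x) (integrable_const _)
    (ae_of_all _ fun x => ?_)
  · exact (((hu.continuous_fderiv one_ne_zero).clm_apply continuous_const).abs.rpow_const
      fun x => Or.inr (by linarith)).aestronglyMeasurable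
  · exact ((fderiv ℝ u x).continuous.comp continuous_subtype_val).abs.rpow_const
      fun _ => Or.inr (by linarith)

end main

lemma real_final {N P s c D i : ℝ} (hN : 0 < N) (hP : 0 < P) (hs : 0 < s) (hc : 0 < c)
    (hD : 0 < D) (hi : 0 < i)
    (hHo : s ≤ (c * D) ^ (N / (N + P)) * i ^ (P / (N + P))) :
    (s ^ ((N + P) / (N * P)) * c ^ (-(1 / P))) * i ^ (-(1 / N)) ≤ D ^ (1 / P) := by
  set j : ℝ := c * D with hj
  have hjpos : 0 < j := mul_pos hc hD
  set a : ℝ := N / (N + P) with ha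
  set b : ℝ := P / (N + P) with hb
  have hNP : 0 < N + P := by linarith
  have hapos : 0 < a := div_pos hN hNP
  have hbpos : 0 < b := div_pos hP hNP
  have hja : 0 < j ^ a := Real.rpow_pos_of_pos hjpos a
  have hib : 0 < i ^ b := Real.rpow_pos_of_pos hi b
  set E : ℝ := (N + P) / (N * P) with hE
  have hEpos : 0 < E := div_pos hNP (mul_pos hN hP)
  have h1 : s * (j ^ a)⁻¹ ≤ i ^ b := by
    rw [← div_eq_mul_inv, div_le_iff₀ hja]
    calc s ≤ j ^ a * i ^ b := hHo
      _ = i ^ b * j ^ a := mul_comm _ _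
  have hx : 0 < s * (j ^ a)⁻¹ := by positivity
  have h2 : (i ^ b) ^ (-(1 / (N * b))) ≤ (s * (j ^ a)⁻¹) ^ (-(1 / (N * b))) :=
    Real.rpow_le_rpow_of_nonpos hx h1 (by
      have : 0 < 1 / (N * b) := by positivity
      linarith)
  have hbne : b ≠ 0 := hbpos.ne'
  have hL : (i ^ b) ^ (-(1 / (N * b))) = i ^ (-(1 / N)) := by
    rw [← Real.rpow_mul hi.le]
    congr 1
    field_simp
  have hEeq : 1 / (N * b) = E := by
    rw [hb, hE]
    rw [div_eq_div_iff (by positivity) (by positivity)]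
    field_simp
  have hR : (s * (j ^ a)⁻¹) ^ (-(1 / (N * b))) = s ^ (-E) * j ^ (1 / P) := by
    rw [hEeq, Real.mul_rpow hs.le (by positivity), ← Real.rpow_neg_one (j ^ a),
      ← Real.rpow_mul hjpos.le, ← Real.rpow_mul hjpos.le]
    congr 2
    rw [ha, hE]
    field_simp
  have h3 : i ^ (-(1 / N)) ≤ s ^ (-E) * j ^ (1 / P) := by
    rw [← hL, ← hR]; exact h2
  have hA : 0 < s ^ E * c ^ (-(1 / P)) := by positivity
  have h4 : (s ^ E * c ^ (-(1 / P))) * i ^ (-(1 / N))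
      ≤ (s ^ E * c ^ (-(1 / P))) * (s ^ (-E) * j ^ (1 / P)) :=
    mul_le_mul_of_nonneg_left h3 hA.le
  have h5 : (s ^ E * c ^ (-(1 / P))) * (s ^ (-E) * j ^ (1 / P)) = D ^ (1 / P) := by
    rw [hj, Real.mul_rpow hc.le hD.le]
    have hss : s ^ E * s ^ (-E) = 1 := by
      rw [← Real.rpow_add hs, add_neg_cancel, Real.rpow_zero]
    have hcc : c ^ (-(1 / P)) * c ^ (1 / P) = 1 := by
      rw [← Real.rpow_add hc, neg_add_cancel, Real.rpow_zero]
    calc (s ^ E * c ^ (-(1 / P))) * (s ^ (-E) * (c ^ (1 / P) * D ^ (1 / P)))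
        = (s ^ E * s ^ (-E)) * ((c ^ (-(1 / P)) * c ^ (1 / P)) * D ^ (1 / P)) := by ring
      _ = D ^ (1 / P) := by rw [hss, hcc]; ring
  calc (s ^ ((N + P) / (N * P)) * c ^ (-(1 / P))) * i ^ (-(1 / N))
      = (s ^ E * c ^ (-(1 / P))) * i ^ (-(1 / N)) := rfl
    _ ≤ _ := h4
    _ = D ^ (1 / P) := h5

end Aux

/-- Comparison with the Dirichlet energy: `E_{p,Ω}(u) ≤ (∫_Ω |∇u|^p dx)^{1/p}`. -/
theorem statement7 (n : ℕ) (hn : 2 ≤ n) (p : ℝ) (hp : 1 ≤ p) (hpn : p < n)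
    (Ω : Set (En n)) (hΩo : IsOpen Ω) (hΩb : Bornology.IsBounded Ω)
    (e₁ : En n) (he₁ : ‖e₁‖ = 1)
    (u : En n → ℝ) (hu : ContDiff ℝ 1 u) (hcs : HasCompactSupport u)
    (hsupp : tsupport u ⊆ Ω) :
    affineEnergy n p e₁ Ω u ≤ (∫ x in Ω, ‖fderiv ℝ u x‖ ^ p) ^ (1 / p) := by
  haveI : Nonempty (Fin n) := ⟨⟨0, by omega⟩⟩
  haveI : IsFiniteMeasure ((volume : Measure (En n)).restrict Ω) :=
    ⟨by rw [Measure.restrict_apply_univ]; exact hΩb.measure_lt_top⟩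
  have hp0 : (0:ℝ) < p := lt_of_lt_of_le one_pos hp
  have hn0 : (0:ℝ) < (n:ℝ) := by exact_mod_cast (by omega : 0 < n)
  have hDnn : 0 ≤ ∫ x in Ω, ‖fderiv ℝ u x‖ ^ p :=
    integral_nonneg fun x => Real.rpow_nonneg (norm_nonneg _) _
  have hRHS : 0 ≤ (∫ x in Ω, ‖fderiv ℝ u x‖ ^ p) ^ (1 / p) := Real.rpow_nonneg hDnn _
  have hψnn : ∀ ξ, 0 ≤ Psi n p Ω u ξ :=
    fun ξ => integral_nonneg fun x => Real.rpow_nonneg (abs_nonneg _) _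
  have hσuniv_ne : sphereMeasure n Set.univ ≠ 0 := by
    intro h
    have := sphereMeasure_univ_toReal_pos n hn
    rw [h] at this; simp at this
  by_cases hzero : ∃ ξ0, Psi n p Ω u ξ0 = 0
  · -- degenerate case : `u ≡ 0` and the lintegral is infinite
    obtain ⟨ξ0, h0⟩ := hzero
    have hu0 := vanish hp hΩo hΩb hu hcs hsupp ξ0 h0
    have hf0 : ∀ x, fderiv ℝ u x = 0 := fun x => by
      rw [show u = fun _ => (0:ℝ) from funext hu0]
      exact fderiv_const_apply 0
    have hPsi0 : ∀ ξ, Psi n p Ω u ξ = 0 := fun ξ => by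
      unfold Psi
      simp [hf0, Real.zero_rpow hp0.ne']
    have hI : (∫⁻ ξ, ENNReal.ofReal (Psi n p Ω u ξ) ^ (-((n:ℝ)/p)) ∂(sphereMeasure n))
        = ⊤ := by
      have hpt : ∀ ξ : unitSphere n,
          ENNReal.ofReal (Psi n p Ω u ξ) ^ (-((n:ℝ)/p)) = (⊤:ℝ≥0∞) := fun ξ => by
        rw [hPsi0 ξ, ENNReal.ofReal_zero]
        exact ENNReal.zero_rpow_of_neg (by
          have : (0:ℝ) < (n:ℝ)/p := div_pos hn0 hp0
          linarith)
      rw [lintegral_congr hpt, lintegral_const]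
      exact ENNReal.top_mul hσuniv_ne
    unfold affineEnergy
    rw [hI, ENNReal.top_rpow_of_neg (by
        have : (0:ℝ) < 1/(n:ℝ) := by positivity
        linarith), ENNReal.toReal_zero, mul_zero]
    exact hRHS
  · push_neg at hzero
    have hψpos : ∀ ξ, 0 < Psi n p Ω u ξ :=
      fun ξ => lt_of_le_of_ne (hψnn ξ) (Ne.symm (hzero ξ))
    obtain ⟨C, hC0, hC⟩ := exists_bound hu hcs
    have hψleD : ∀ ξ, Psi n p Ω u ξ ≤ ∫ x in Ω, ‖fderiv ℝ u x‖ ^ p := by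
      intro ξ
      unfold Psi
      refine integral_mono ?_ ?_ fun x => ?_
      · refine (integrable_const (C ^ p)).mono'
          (((hu.continuous_fderiv one_ne_zero).clm_apply continuous_const).abs.rpow_const
            fun x => Or.inr (by linarith)).aestronglyMeasurable
          (ae_of_all _ fun x => h_bound hp hC ξ x)
      · refine (integrable_const (C ^ p)).mono'
          ((hu.continuous_fderiv one_ne_zero).norm.rpow_const
            fun x => Or.inr (by linarith)).aestronglyMeasurable
          (ae_of_all _ fun x => ?_)
        rw [Real.norm_eq_abs, abs_of_nonneg (Real.rpow_nonneg (norm_nonneg _) _)]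
        exact Real.rpow_le_rpow (norm_nonneg _) (hC x) hp0.le
      · refine Real.rpow_le_rpow (abs_nonneg _) ?_ hp0.le
        calc |fderiv ℝ u x (ξ : En n)| ≤ ‖fderiv ℝ u x‖ * ‖(ξ : En n)‖ :=
              (fderiv ℝ u x).le_opNorm _
          _ = ‖fderiv ℝ u x‖ := by rw [norm_coe_sphere, mul_one]
    have hξ₁ : e₁ ∈ unitSphere n := by rw [mem_sphere_zero_iff_norm]; exact he₁
    have hDpos : 0 < ∫ x in Ω, ‖fderiv ℝ u x‖ ^ p :=
      lt_of_lt_of_le (hψpos ⟨e₁, hξ₁⟩) (hψleD ⟨e₁, hξ₁⟩)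
    have hcpos := cp_pos n hn p hp e₁ he₁
    have hψcont : Continuous (Psi n p Ω u) := psi_continuous hp hΩb hu hcs
    have hψint : Integrable (Psi n p Ω u) (sphereMeasure n) :=
      (integrable_const (∫ x in Ω, ‖fderiv ℝ u x‖ ^ p)).mono' hψcont.aestronglyMeasurable
        (ae_of_all _ fun ξ => by
          rw [Real.norm_eq_abs, abs_of_nonneg (hψnn ξ)]; exact hψleD ξ)
    have hJ : ∫⁻ ξ, ENNReal.ofReal (Psi n p Ω u ξ) ∂(sphereMeasure n)
        = ENNReal.ofReal ((∫ ξ, |⟪e₁, (ξ : En n)⟫| ^ p ∂(sphereMeasure n))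
            * ∫ x in Ω, ‖fderiv ℝ u x‖ ^ p) := by
      rw [← ofReal_integral_eq_lintegral_ofReal hψint (ae_of_all _ hψnn),
        fubini_step hp hΩb hu hcs e₁ he₁]
    -- Hölder's inequality
    have hFmeas : Measurable fun ξ => ENNReal.ofReal (Psi n p Ω u ξ) :=
      ENNReal.measurable_ofReal.comp hψcont.measurable
    have hconj : Real.HolderConjugate (((n:ℝ)+p)/(n:ℝ)) (((n:ℝ)+p)/p) := by
      rw [Real.holderConjugate_iff]
      constructor
      · rw [lt_div_iff₀ hn0]; linarith
      · rw [inv_div, inv_div, ← add_div, div_self (by positivity)]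
    have hHo := ENNReal.lintegral_mul_le_Lp_mul_Lq (sphereMeasure n) hconj
      (f := fun ξ => ENNReal.ofReal (Psi n p Ω u ξ) ^ ((n:ℝ)/((n:ℝ)+p)))
      (g := fun ξ => ENNReal.ofReal (Psi n p Ω u ξ) ^ (-((n:ℝ)/((n:ℝ)+p))))
      (hFmeas.pow measurable_const).aemeasurable
      (hFmeas.pow measurable_const).aemeasurable
    have hFne : ∀ ξ, ENNReal.ofReal (Psi n p Ω u ξ) ≠ 0 :=
      fun ξ => (ENNReal.ofReal_pos.2 (hψpos ξ)).ne'
    have hFnt : ∀ ξ, ENNReal.ofReal (Psi n p Ω u ξ) ≠ ⊤ := fun ξ => ENNReal.ofReal_ne_top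
    have hHo2 : sphereMeasure n Set.univ
        ≤ (∫⁻ ξ, ENNReal.ofReal (Psi n p Ω u ξ) ∂(sphereMeasure n)) ^ ((n:ℝ)/((n:ℝ)+p))
          * (∫⁻ ξ, ENNReal.ofReal (Psi n p Ω u ξ) ^ (-((n:ℝ)/p)) ∂(sphereMeasure n))
              ^ (p/((n:ℝ)+p)) := by
      have h1 : ∫⁻ ξ, ((fun ξ => ENNReal.ofReal (Psi n p Ω u ξ) ^ ((n:ℝ)/((n:ℝ)+p)))
          * fun ξ => ENNReal.ofReal (Psi n p Ω u ξ) ^ (-((n:ℝ)/((n:ℝ)+p)))) ξ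
            ∂(sphereMeasure n) = sphereMeasure n Set.univ := by
        rw [lintegral_congr (g := fun _ => (1:ℝ≥0∞)) fun ξ => ?_, lintegral_one]
        show ENNReal.ofReal (Psi n p Ω u ξ) ^ ((n:ℝ)/((n:ℝ)+p))
            * ENNReal.ofReal (Psi n p Ω u ξ) ^ (-((n:ℝ)/((n:ℝ)+p))) = 1
        rw [← ENNReal.rpow_add _ _ (hFne ξ) (hFnt ξ), add_neg_cancel, ENNReal.rpow_zero]
      have h2 : ∀ ξ : unitSphere n, (ENNReal.ofReal (Psi n p Ω u ξ) ^ ((n:ℝ)/((n:ℝ)+p)))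
          ^ (((n:ℝ)+p)/(n:ℝ)) = ENNReal.ofReal (Psi n p Ω u ξ) := fun ξ => by
        rw [← ENNReal.rpow_mul]
        rw [show ((n:ℝ)/((n:ℝ)+p)) * (((n:ℝ)+p)/(n:ℝ)) = 1 by
          field_simp]
        exact ENNReal.rpow_one _
      have h3 : ∀ ξ : unitSphere n, (ENNReal.ofReal (Psi n p Ω u ξ) ^ (-((n:ℝ)/((n:ℝ)+p))))
          ^ (((n:ℝ)+p)/p) = ENNReal.ofReal (Psi n p Ω u ξ) ^ (-((n:ℝ)/p)) := fun ξ => by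
        rw [← ENNReal.rpow_mul]
        congr 1
        field_simp
      calc sphereMeasure n Set.univ
          = ∫⁻ ξ, ((fun ξ => ENNReal.ofReal (Psi n p Ω u ξ) ^ ((n:ℝ)/((n:ℝ)+p)))
            * fun ξ => ENNReal.ofReal (Psi n p Ω u ξ) ^ (-((n:ℝ)/((n:ℝ)+p)))) ξ
              ∂(sphereMeasure n) := h1.symm
        _ ≤ (∫⁻ ξ, (ENNReal.ofReal (Psi n p Ω u ξ) ^ ((n:ℝ)/((n:ℝ)+p)))
              ^ (((n:ℝ)+p)/(n:ℝ)) ∂(sphereMeasure n)) ^ (1/(((n:ℝ)+p)/(n:ℝ)))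
            * (∫⁻ ξ, (ENNReal.ofReal (Psi n p Ω u ξ) ^ (-((n:ℝ)/((n:ℝ)+p))))
              ^ (((n:ℝ)+p)/p) ∂(sphereMeasure n)) ^ (1/(((n:ℝ)+p)/p)) := hHo
        _ = _ := by
            rw [lintegral_congr h2, lintegral_congr h3, one_div_div, one_div_div]
    set I := ∫⁻ ξ, ENNReal.ofReal (Psi n p Ω u ξ) ^ (-((n:ℝ)/p)) ∂(sphereMeasure n) with hIdef
    by_cases hItop : I = ⊤
    · unfold affineEnergy
      rw [← hIdef, hItop, ENNReal.top_rpow_of_neg (by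
          have : (0:ℝ) < 1/(n:ℝ) := by positivity
          linarith), ENNReal.toReal_zero, mul_zero]
      exact hRHS
    · have hI0 : I ≠ 0 := by
        intro h
        rw [h, ENNReal.zero_rpow_of_pos (by positivity : (0:ℝ) < p/((n:ℝ)+p)),
          mul_zero] at hHo2
        exact hσuniv_ne (le_antisymm hHo2 zero_le)
      have hJne : (∫⁻ ξ, ENNReal.ofReal (Psi n p Ω u ξ) ∂(sphereMeasure n)) ≠ ⊤ := by
        rw [hJ]; exact ENNReal.ofReal_ne_top
      have hstoR := sphereMeasure_univ_toReal_pos n hn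
      have hHoR : (sphereMeasure n Set.univ).toReal
          ≤ ((∫ ξ, |⟪e₁, (ξ : En n)⟫| ^ p ∂(sphereMeasure n))
              * ∫ x in Ω, ‖fderiv ℝ u x‖ ^ p) ^ ((n:ℝ)/((n:ℝ)+p))
            * I.toReal ^ (p/((n:ℝ)+p)) := by
        have hne : (∫⁻ ξ, ENNReal.ofReal (Psi n p Ω u ξ) ∂(sphereMeasure n))
              ^ ((n:ℝ)/((n:ℝ)+p)) * I ^ (p/((n:ℝ)+p)) ≠ ⊤ :=
          ENNReal.mul_ne_top (ENNReal.rpow_ne_top_of_nonneg (by positivity) hJne)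
            (ENNReal.rpow_ne_top_of_nonneg (by positivity) hItop)
        have hmono := ENNReal.toReal_mono hne hHo2
        rwa [ENNReal.toReal_mul, ← ENNReal.toReal_rpow, ← ENNReal.toReal_rpow, hJ,
          ENNReal.toReal_ofReal (mul_nonneg hcpos.le hDnn)] at hmono
      have hienn : 0 < I.toReal := ENNReal.toReal_pos hI0 hItop
      have hfinal := real_final hn0 hp0 hstoR hcpos hDpos hienn hHoR
      unfold affineEnergy alphanp
      have hnn : nOmega n = (sphereMeasure n Set.univ).toReal := by
        rw [nOmega, sphereMeasure_univ, ENNReal.toReal_mul, ENNReal.toReal_natCast]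
      rw [hnn, ← hIdef, ← ENNReal.toReal_rpow]
      exact hfinal
end
end

section
/- (Divergence-theorem identity in the proof of the Pohozaev identity, Proposition 4.) Let n ≥ 2, let Ω ⊆ ℝⁿ be an open set, let u : ℝⁿ → ℝ be a C¹ function with compact support contained in Ω, let f : ℝ → ℝ be continuous, and let F(t) = ∫_0^t f(θ) dθ. Then ∫_Ω (x·∇u(x)) f(u(x)) dx = −n ∫_Ω F(u(x)) dx. -/
open MeasureTheory Metric Filter
open scoped ENNReal RealInnerProductSpace NNReal

noncomputable section

set_option maxHeartbeats 2000000 in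
/-- Divergence-theorem identity from the proof of the Pohozaev identity:
`∫_Ω (x·∇u(x)) f(u(x)) dx = -n ∫_Ω F(u(x)) dx`, where `F(t) = ∫_0^t f(θ) dθ`. -/
theorem statement14 (n : ℕ) (hn : 2 ≤ n)
    (Ω : Set (En n)) (hΩo : IsOpen Ω)
    (u : En n → ℝ) (hu : ContDiff ℝ 1 u) (hcs : HasCompactSupport u)
    (hsupp : tsupport u ⊆ Ω)
    (f : ℝ → ℝ) (hf : Continuous f) :
    (∫ x in Ω, (fderiv ℝ u x x) * f (u x)) =
      -(n : ℝ) * ∫ x in Ω, (∫ θ in (0 : ℝ)..(u x), f θ) := by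

  -- Define F and g = F ∘ u
  set F : ℝ → ℝ := fun t => ∫ θ in (0:ℝ)..t, f θ with hF
  have hF0 : F 0 = 0 := by simp [hF]
  have hFderiv : ∀ t, HasDerivAt F (f t) t := fun t =>
    (hf.integral_hasStrictDerivAt 0 t).hasDerivAt
  have hFc1 : ContDiff ℝ 1 F := by
    rw [contDiff_one_iff_deriv]
    refine ⟨fun t => (hFderiv t).differentiableAt, ?_⟩
    have : deriv F = f := funext fun t => (hFderiv t).deriv
    rw [this]; exact hf
  set g : En n → ℝ := fun x => F (u x) with hg
  have hgc1 : ContDiff ℝ 1 g := hFc1.comp hu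
  have hgcs : HasCompactSupport g := hcs.comp_left hF0
  have hgsupp : tsupport g ⊆ tsupport u :=
    closure_mono (fun x hx => by
      simp only [Function.mem_support] at hx ⊢
      intro hux
      exact hx (by simp only [hg]; rw [hux, hF0]))
  have hgderiv : ∀ x, HasFDerivAt g (f (u x) • fderiv ℝ u x) x := by
    intro x
    exact (hFderiv (u x)).comp_hasFDerivAt x (hu.differentiable one_ne_zero x).hasFDerivAt
  have hgfd : ∀ x, fderiv ℝ g x = f (u x) • fderiv ℝ u x := fun x => (hgderiv x).fderiv
  -- Convert set integrals to integrals over the whole space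
  have hL : (∫ x in Ω, (fderiv ℝ u x x) * f (u x)) = ∫ x, (fderiv ℝ u x x) * f (u x) := by
    apply setIntegral_eq_integral_of_forall_compl_eq_zero
    intro x hx
    have : fderiv ℝ u x = 0 := by
      by_contra h
      exact hx (hsupp (support_fderiv_subset ℝ h))
    simp [this]
  have hR : (∫ x in Ω, g x) = ∫ x, g x := by
    apply setIntegral_eq_integral_of_forall_compl_eq_zero
    intro x hx
    by_contra h
    exact hx (hsupp (hgsupp (subset_tsupport _ h)))
  rw [hL]
  show _ = -(n:ℝ) * ∫ x in Ω, g x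
  rw [hR]
  -- rewrite integrand as fderiv g x x
  have hint : ∀ x, (fderiv ℝ u x x) * f (u x) = fderiv ℝ g x x := by
    intro x; rw [hgfd]; simp [mul_comm]
  simp only [hint]
  -- decompose x into coordinates
  have hdecomp : ∀ x : En n, fderiv ℝ g x x
      = ∑ i : Fin n, x i * fderiv ℝ g x (EuclideanSpace.single i (1:ℝ)) := by
    intro x
    have hx : (∑ i : Fin n, x i • EuclideanSpace.single i (1:ℝ)) = x := by
      have h := (EuclideanSpace.basisFun (Fin n) ℝ).sum_repr x
      simpa [EuclideanSpace.basisFun_repr, EuclideanSpace.basisFun_apply] using h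
    generalize fderiv ℝ g x = L
    conv_lhs => rw [← hx]
    rw [map_sum]
    exact Finset.sum_congr rfl fun i _ => by rw [L.map_smul]; rfl
  -- integrability facts
  have hgcont : Continuous g := hgc1.continuous
  have hfdcont : Continuous fun x => fderiv ℝ g x := hgc1.continuous_fderiv one_ne_zero
  have hgint : Integrable g volume := hgcont.integrable_of_hasCompactSupport hgcs
  have hfd_cs : HasCompactSupport (fderiv ℝ g) := hgcs.fderiv ℝ
  -- key per-coordinate integration by parts
  have hkey : ∀ i : Fin n,
      (∫ x : En n, x i * fderiv ℝ g x (EuclideanSpace.single i (1:ℝ))) = - ∫ x, g x := by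
    intro i
    set v : En n := EuclideanSpace.single i (1:ℝ)
    have hproj : ∀ x : En n, fderiv ℝ (fun y : En n => y i) x = EuclideanSpace.proj i := by
      intro x
      exact (EuclideanSpace.proj (𝕜 := ℝ) (ι := Fin n) i).fderiv
    have hprojv : (EuclideanSpace.proj (𝕜 := ℝ) (ι := Fin n) i) v = 1 := by
      simp [v, PiLp.proj_apply, EuclideanSpace.single_apply]
    have h1 : Integrable (fun x : En n => fderiv ℝ (fun y : En n => y i) x v * g x) := by
      simp only [hproj, hprojv, one_mul]
      exact hgint
    have hcont2 : Continuous (fun x : En n => x i * fderiv ℝ g x v) := by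
      apply Continuous.mul
      · exact (EuclideanSpace.proj (𝕜 := ℝ) (ι := Fin n) i).continuous
      · exact (ContinuousLinearMap.apply ℝ ℝ v).continuous.comp hfdcont
    have hcs2 : HasCompactSupport (fun x : En n => x i * fderiv ℝ g x v) := by
      apply HasCompactSupport.mul_left
      exact (hfd_cs.comp_left (g := fun L : En n →L[ℝ] ℝ => L v) (by simp))
    have h2 : Integrable (fun x : En n => x i * fderiv ℝ g x v) :=
      hcont2.integrable_of_hasCompactSupport hcs2
    have hcont3 : Continuous (fun x : En n => x i * g x) :=
      ((EuclideanSpace.proj (𝕜 := ℝ) (ι := Fin n) i).continuous).mul hgcont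
    have hcs3 : HasCompactSupport (fun x : En n => x i * g x) :=
      HasCompactSupport.mul_left hgcs
    have h3 : Integrable (fun x : En n => x i * g x) :=
      hcont3.integrable_of_hasCompactSupport hcs3
    have := integral_mul_fderiv_eq_neg_fderiv_mul_of_integrable h1 h2 h3
      (fun x _ => (EuclideanSpace.proj (𝕜 := ℝ) (ι := Fin n) i).differentiableAt)
      (fun x _ => hgc1.differentiable one_ne_zero x)
      (v := v)
    rw [this]
    simp only [hproj, hprojv, one_mul]
  -- finish
  calc (∫ x : En n, fderiv ℝ g x x)
      = ∫ x : En n, ∑ i : Fin n, x i * fderiv ℝ g x (EuclideanSpace.single i (1:ℝ)) := by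
        simp only [hdecomp]
    _ = ∑ i : Fin n, ∫ x : En n, x i * fderiv ℝ g x (EuclideanSpace.single i (1:ℝ)) := by
        apply integral_finset_sum
        intro i _
        apply Continuous.integrable_of_hasCompactSupport
        · exact ((EuclideanSpace.proj (𝕜 := ℝ) (ι := Fin n) i).continuous).mul
            ((ContinuousLinearMap.apply ℝ ℝ _).continuous.comp hfdcont)
        · exact HasCompactSupport.mul_left
            (hfd_cs.comp_left (g := fun L : En n →L[ℝ] ℝ => L _) (by simp))
    _ = ∑ i : Fin n, -∫ x, g x := by simp only [hkey]
    _ = -(n:ℝ) * ∫ x, g x := by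
        rw [Finset.sum_const, Finset.card_univ, Fintype.card_fin]
        simp [neg_mul, mul_comm]
end
end

section
/- (Key inequality behind Theorem 4: nonpositivity of the least energy level above the principal affine eigenvalue.) Let 1 < p < n, let p < q ≤ np/(n−p), and let Ω ⊆ ℝⁿ be a nonempty bounded open set. Define λ₁ = inf { E_{p,Ω}(u)^p : u a C¹ function ℝⁿ → ℝ with compact support contained in Ω and ∫_Ω |u|^p dx = 1 } and, for λ ∈ ℝ, c(λ) = inf { (E_{p,Ω}(u)^p − λ ∫_Ω |u|^p dx) / (∫_Ω |u|^q dx)^{p/q} : u a C¹ function ℝⁿ → ℝ with compact support contained in Ω, u ≠ 0 }. If λ ≥ λ₁, then c(λ) ≤ 0. -/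
open MeasureTheory Metric Filter
open scoped ENNReal RealInnerProductSpace NNReal

noncomputable section

lemma auxCont {n : ℕ} {u : En n → ℝ} (hu : Continuous u) {r : ℝ} (hr : 0 < r) :
    Continuous (fun x => |u x| ^ r) :=
  Continuous.rpow_const hu.abs (fun _ => Or.inr hr.le)

lemma auxHCS {n : ℕ} {u : En n → ℝ} (hcs : HasCompactSupport u) {r : ℝ} (hr : 0 < r) :
    HasCompactSupport (fun x => |u x| ^ r) := by
  have : (fun x => |u x| ^ r) = (fun t : ℝ => |t| ^ r) ∘ u := rfl
  rw [this]
  exact hcs.comp_left (by simp [Real.zero_rpow hr.ne'])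

lemma auxPos {n : ℕ} {Ω : Set (En n)} (hΩo : IsOpen Ω) {u : En n → ℝ}
    (hu : Continuous u) (hcs : HasCompactSupport u) (hsupp : tsupport u ⊆ Ω)
    (hune : u ≠ 0) {r : ℝ} (hr : 0 < r) :
    0 < ∫ x in Ω, |u x| ^ r := by
  have hint : Integrable (fun x => |u x| ^ r) ((volume : Measure (En n)).restrict Ω) :=
    ((auxCont hu hr).integrable_of_hasCompactSupport (auxHCS hcs hr)).restrict
  rw [integral_pos_iff_support_of_nonneg
    (fun x => Real.rpow_nonneg (abs_nonneg _) r) hint]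
  have hss : Function.support (fun x => |u x| ^ r) = Function.support u := by
    ext x
    simp only [Function.mem_support]
    rw [not_iff_not]
    constructor
    · intro h
      rcases (Real.rpow_eq_zero_iff_of_nonneg (abs_nonneg _)).mp h with ⟨h1, _⟩
      exact abs_eq_zero.mp h1
    · intro h; simp [h, Real.zero_rpow hr.ne']
  rw [hss]
  have hopen : IsOpen (Function.support u) := by
    rw [Function.support_eq_preimage]
    exact (isOpen_compl_singleton).preimage hu
  rw [Measure.restrict_apply hopen.measurableSet,
    Set.inter_eq_self_of_subset_left ((subset_tsupport u).trans hsupp)]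
  obtain ⟨x, hx⟩ := Function.ne_iff.mp hune
  exact hopen.measure_pos volume ⟨x, hx⟩

lemma auxHolder {n : ℕ} {Ω : Set (En n)} (hΩfin : volume Ω ≠ ⊤)
    (hV : 0 < (volume Ω).toReal) {p q : ℝ}
    (hp : 0 < p) (hpq : p < q) {u : En n → ℝ}
    (hu : Continuous u) (hcs : HasCompactSupport u)
    (hnorm : (∫ x in Ω, |u x| ^ p) = 1) :
    (volume Ω).toReal ^ (p / q - 1) ≤ (∫ x in Ω, |u x| ^ q) ^ (p / q) := by
  have hp' : p ≠ 0 := hp.ne'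
  have hq : 0 < q := hp.trans hpq
  have ha1 : 1 < q / p := (one_lt_div hp).mpr hpq
  have hconj : (q/p).HolderConjugate (q/p).conjExponent := Real.HolderConjugate.conjExponent ha1
  haveI : IsFiniteMeasure ((volume : Measure (En n)).restrict Ω) :=
    ⟨by rwa [Measure.restrict_apply_univ, lt_top_iff_ne_top]⟩
  have hmem1 : MemLp (fun x => |u x| ^ p) (ENNReal.ofReal (q/p))
      ((volume : Measure (En n)).restrict Ω) :=
    (auxCont hu hp).memLp_of_hasCompactSupport (auxHCS hcs hp)
  have hmem2 : MemLp (fun _ : En n => (1:ℝ)) (ENNReal.ofReal (q/p).conjExponent)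
      ((volume : Measure (En n)).restrict Ω) := memLp_const 1
  have key := MeasureTheory.integral_mul_le_Lp_mul_Lq_of_nonneg hconj
    (Filter.Eventually.of_forall fun x => Real.rpow_nonneg (abs_nonneg _) p)
    (Filter.Eventually.of_forall fun _ => zero_le_one) hmem1 hmem2
  simp only [mul_one] at key
  rw [hnorm] at key
  have h1 : (fun a : En n => (|u a| ^ p) ^ (q/p)) = fun a => |u a| ^ q := by
    funext x
    rw [← Real.rpow_mul (abs_nonneg _)]
    congr 1
    field_simp
  rw [h1] at key
  have h2 : (fun _ : En n => (1:ℝ) ^ (q/p).conjExponent) = fun _ => (1:ℝ) := by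
    funext x; rw [Real.one_rpow]
  simp only [h2] at key
  rw [integral_const, measureReal_restrict_apply_univ, measureReal_def, smul_eq_mul, mul_one] at key
  have h3 : 1 / (q/p) = p / q := one_div_div q p
  rw [h3] at key
  have h4 : 1 / (q/p).conjExponent = 1 - p / q := by
    have := hconj.inv_add_inv_eq_one
    have h5 : ((q/p) : ℝ)⁻¹ = p / q := by rw [inv_div]
    rw [one_div]
    linarith [h5 ▸ this]
  rw [h4] at key
  set D := (∫ (a : En n) in Ω, |u a| ^ q) ^ (p/q) with hD
  set Vr := (volume Ω).toReal
  have hmul : Vr ^ (p/q - 1) * Vr ^ (1 - p/q) = 1 := by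
    rw [← Real.rpow_add hV]; norm_num
  have hnn : (0:ℝ) ≤ Vr ^ (p/q - 1) := Real.rpow_nonneg hV.le _
  calc Vr ^ (p/q - 1) = Vr ^ (p/q - 1) * 1 := (mul_one _).symm
    _ ≤ Vr ^ (p/q - 1) * (D * Vr ^ (1 - p/q)) := mul_le_mul_of_nonneg_left key hnn
    _ = D * (Vr ^ (p/q - 1) * Vr ^ (1 - p/q)) := by ring
    _ = D := by rw [hmul, mul_one]

lemma auxNormalize {n : ℕ} {Ω : Set (En n)} (hΩo : IsOpen Ω) {u₀ : En n → ℝ}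
    (h1 : ContDiff ℝ 1 u₀) (h2 : HasCompactSupport u₀) (h3 : tsupport u₀ ⊆ Ω)
    (h4 : u₀ ≠ 0) {p : ℝ} (hp : 0 < p) :
    ∃ u : En n → ℝ, ContDiff ℝ 1 u ∧ HasCompactSupport u ∧ tsupport u ⊆ Ω ∧
      (∫ x in Ω, |u x| ^ p) = 1 := by
  set I := ∫ x in Ω, |u₀ x| ^ p with hI
  have hIpos : 0 < I := auxPos hΩo h1.continuous h2 h3 h4 hp
  set t := I ^ (-(1/p)) with ht
  have htpos : 0 < t := Real.rpow_pos_of_pos hIpos _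
  refine ⟨fun x => t * u₀ x, contDiff_const.mul h1, ?_, ?_, ?_⟩
  · have : (fun x => t * u₀ x) = (fun s : ℝ => t * s) ∘ u₀ := rfl
    rw [this]; exact h2.comp_left (by simp)
  · have hsub : Function.support (fun x => t * u₀ x) ⊆ Function.support u₀ := by
      intro x hx
      simp only [Function.mem_support] at hx ⊢
      intro h; exact hx (by rw [h, mul_zero])
    exact subset_trans (closure_mono hsub) h3
  · have heq : (fun x => |t * u₀ x| ^ p) = fun x => t ^ p * |u₀ x| ^ p := by
      funext x
      rw [abs_mul, abs_of_pos htpos, Real.mul_rpow htpos.le (abs_nonneg _)]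
    calc (∫ x in Ω, |t * u₀ x| ^ p) = ∫ x in Ω, t ^ p * |u₀ x| ^ p := by rw [heq]
      _ = t ^ p * I := by rw [integral_const_mul]
      _ = 1 := by
          rw [ht, ← Real.rpow_mul hIpos.le]
          have : -(1/p) * p = -1 := by field_simp
          rw [this, Real.rpow_neg_one, inv_mul_cancel₀ hIpos.ne']

/-- Key inequality behind Theorem 4: if `λ ≥ λ₁ = inf {E_{p,Ω}(u)^p : ‖u‖_{L^p(Ω)} = 1}`,
then the least energy level
`c(λ) = inf {(E_{p,Ω}(u)^p - λ∫_Ω|u|^p)/(∫_Ω|u|^q)^{p/q} : u ≠ 0}` is nonpositive. -/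
theorem statement16 (n : ℕ) (hn : 2 ≤ n) (p q : ℝ) (hp1 : 1 < p) (hpn : p < n)
    (hq : p < q) (hq' : q ≤ (n : ℝ) * p / ((n : ℝ) - p))
    (Ω : Set (En n)) (hΩo : IsOpen Ω) (hΩb : Bornology.IsBounded Ω) (hΩne : Ω.Nonempty)
    (e₁ : En n) (he₁ : ‖e₁‖ = 1) (lam : ℝ)
    (hlam : sInf {r : ℝ | ∃ u : En n → ℝ, ContDiff ℝ 1 u ∧ HasCompactSupport u ∧
        tsupport u ⊆ Ω ∧ (∫ x in Ω, |u x| ^ p) = 1 ∧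
        r = affineEnergy n p e₁ Ω u ^ p} ≤ lam) :
    sInf {r : ℝ | ∃ u : En n → ℝ, ContDiff ℝ 1 u ∧ HasCompactSupport u ∧
        tsupport u ⊆ Ω ∧ u ≠ 0 ∧
        r = (affineEnergy n p e₁ Ω u ^ p - lam * ∫ x in Ω, |u x| ^ p) /
          (∫ x in Ω, |u x| ^ q) ^ (p / q)} ≤ 0 := by
  set S2 := {r : ℝ | ∃ u : En n → ℝ, ContDiff ℝ 1 u ∧ HasCompactSupport u ∧
        tsupport u ⊆ Ω ∧ u ≠ 0 ∧
        r = (affineEnergy n p e₁ Ω u ^ p - lam * ∫ x in Ω, |u x| ^ p) /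
          (∫ x in Ω, |u x| ^ q) ^ (p / q)} with hS2
  by_cases hex : ∃ u : En n → ℝ, ContDiff ℝ 1 u ∧ HasCompactSupport u ∧
      tsupport u ⊆ Ω ∧ u ≠ 0
  swap
  · have hempty : S2 = ∅ := by
      ext r
      simp only [hS2, Set.mem_setOf_eq, Set.mem_empty_iff_false, iff_false]
      rintro ⟨u, h1, h2, h3, h4, -⟩
      exact hex ⟨u, h1, h2, h3, h4⟩
    rw [hempty, Real.sInf_empty]
  obtain ⟨u₀, hu1, hu2, hu3, hu4⟩ := hex
  have hp0 : (0:ℝ) < p := lt_trans one_pos hp1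
  obtain ⟨w, hw1, hw2, hw3, hw4⟩ := auxNormalize hΩo hu1 hu2 hu3 hu4 hp0
  have hS1ne : {r : ℝ | ∃ u : En n → ℝ, ContDiff ℝ 1 u ∧ HasCompactSupport u ∧
      tsupport u ⊆ Ω ∧ (∫ x in Ω, |u x| ^ p) = 1 ∧
      r = affineEnergy n p e₁ Ω u ^ p}.Nonempty :=
    ⟨affineEnergy n p e₁ Ω w ^ p, w, hw1, hw2, hw3, hw4, rfl⟩
  have hΩfin : volume Ω ≠ ⊤ := by
    obtain ⟨R, hR⟩ := hΩb.subset_ball 0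
    exact ((measure_mono hR).trans_lt measure_ball_lt_top).ne
  have hV : 0 < (volume Ω).toReal :=
    ENNReal.toReal_pos (hΩo.measure_pos volume hΩne).ne' hΩfin
  set c₀ := (volume Ω).toReal ^ (p/q - 1) with hc₀
  have hc₀pos : 0 < c₀ := Real.rpow_pos_of_pos hV _
  by_cases hbdd : BddBelow S2
  swap
  · rw [Real.sInf_of_not_bddBelow hbdd]
  have hkey : ∀ ε > (0:ℝ), sInf S2 ≤ ε := by
    intro ε hε
    obtain ⟨r, hrS, hrlt⟩ := Real.lt_sInf_add_pos hS1ne (mul_pos hε hc₀pos)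
    obtain ⟨u, h1, h2, h3, h4, h5⟩ := hrS
    have hrlam : r < lam + ε * c₀ := hrlt.trans_le (by linarith)
    have hune : u ≠ 0 := by
      intro h0
      rw [h0] at h4
      simp [Real.zero_rpow hp0.ne'] at h4
    have hD : c₀ ≤ (∫ x in Ω, |u x| ^ q) ^ (p/q) :=
      auxHolder hΩfin hV hp0 hq h1.continuous h2 h4
    have hv : (r - lam) / ((∫ x in Ω, |u x| ^ q) ^ (p/q)) ∈ S2 :=
      ⟨u, h1, h2, h3, hune, by rw [h4, mul_one, h5]⟩
    refine (csInf_le hbdd hv).trans ?_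
    rcases le_or_gt (r - lam) 0 with hneg | hpos
    · exact (div_nonpos_of_nonpos_of_nonneg hneg (hc₀pos.le.trans hD)).trans hε.le
    · have h6 : (r - lam) / ((∫ x in Ω, |u x| ^ q) ^ (p/q)) ≤ (r - lam) / c₀ :=
        div_le_div_of_nonneg_left hpos.le hc₀pos hD
      have h7 : (r - lam) / c₀ < ε := by
        rw [div_lt_iff₀ hc₀pos]
        linarith
      linarith
  by_contra hcon
  push_neg at hcon
  linarith [hkey (sInf S2 / 2) (by linarith)]
end
end
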